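/- arXiv:1502.01661 — 4 statements merged into one kernel-verified Lean document; each statement's English description precedes it below -/
import Mathlib

section
/- Let (W,S) be a Coxeter system and s,t ∈ S with st of order 3. For every w ∈ D_R(s,t), the set {ws, wt} ∩ D_R(s,t) consists of exactly one element, denoted w*; moreover the map w ↦ w* is an involution of D_R(s,t). -/
open CoxeterSystem List

namespace CoxeterSystem

open scoped Classical

variable {B W : Type*} [Group W] {M : CoxeterMatrix B} (cs : CoxeterSystem M W)

/-- The sign-representation generator: acts on `W × ZMod 2` by conjugating the first
coordinate by `s i` and flipping the sign iff the first coordinate equals `s i`. -/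
noncomputable def stmt4Tau (i : B) : Equiv.Perm (W × ZMod 2) :=
  Function.Involutive.toPerm
    (fun p => (cs.simple i * p.1 * cs.simple i, p.2 + if p.1 = cs.simple i then 1 else 0))
    (by
      rintro ⟨u, e⟩
      have h11 : (1 : ZMod 2) + 1 = 0 := by decide
      have hc : (cs.simple i * u * cs.simple i = cs.simple i) ↔ (u = cs.simple i) := by
        constructor
        · intro h
          have := congrArg (fun x => cs.simple i * x * cs.simple i) h
          simpa [← mul_assoc] using this
        · intro h; rw [h]; simp
      simp only
      rw [Prod.mk.injEq]
      refine ⟨by simp [← mul_assoc], ?_⟩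
      simp only [hc]
      rcases eq_or_ne u (cs.simple i) with h | h
      · simp [h, add_assoc, h11]
      · simp [h])

theorem stmt4Tau_apply (i : B) (u : W) (e : ZMod 2) :
    cs.stmt4Tau i (u, e) =
      (cs.simple i * u * cs.simple i, e + if u = cs.simple i then 1 else 0) :=
  rfl

theorem stmt4_rightInvSeq_cons (i : B) (ω : List B) :
    cs.rightInvSeq (i :: ω) =
      ((cs.wordProd ω)⁻¹ * cs.simple i * cs.wordProd ω) :: cs.rightInvSeq ω := rfl

theorem stmt4_prod_map_tau (ω : List B) (u : W) (e : ZMod 2) :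
    (List.map cs.stmt4Tau ω).prod (u, e) =
      (cs.wordProd ω * u * (cs.wordProd ω)⁻¹,
        e + (((cs.rightInvSeq ω).count u : ℕ) : ZMod 2)) := by
  induction ω generalizing u e with
  | nil => simp
  | cons i ω ih =>
      rw [List.map_cons, List.prod_cons, Equiv.Perm.mul_apply, ih, stmt4Tau_apply,
        stmt4_rightInvSeq_cons, wordProd_cons]
      have hiff : (cs.wordProd ω * u * (cs.wordProd ω)⁻¹ = cs.simple i)
          ↔ ((cs.wordProd ω)⁻¹ * cs.simple i * cs.wordProd ω = u) := by
        constructor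
        · intro h; rw [← h]; group
        · intro h; rw [← h]; group
      rw [Prod.mk.injEq]
      refine ⟨by rw [mul_inv_rev, inv_simple]; simp [mul_assoc], ?_⟩
      rw [List.count_cons]
      simp only [beq_iff_eq]
      by_cases hc : (cs.wordProd ω)⁻¹ * cs.simple i * cs.wordProd ω = u
      · rw [if_pos hc, if_pos (hiff.mpr hc)]
        push_cast
        ring
      · rw [if_neg hc, if_neg (fun h => hc (hiff.mp h))]
        simp

theorem stmt4_prod_map_alternatingWord {G : Type*} [Monoid G] (f : B → G) (k l : B) (m : ℕ) :
    (List.map f (alternatingWord k l (2 * m))).prod = (f k * f l) ^ m := by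
  induction m with
  | zero => simp [alternatingWord]
  | succ m ih =>
      have h : 2 * (m + 1) = (2 * m + 1) + 1 := by ring
      rw [h, alternatingWord_succ', alternatingWord_succ']
      have h1 : ¬ Even (2 * m + 1) := by simp [Nat.even_add_one]
      have h2 : Even (2 * m) := even_two_mul m
      rw [if_neg h1, if_pos h2]
      simp only [List.map_cons, List.prod_cons, ih]
      rw [pow_succ', mul_assoc]

theorem stmt4_alternatingWord_add (k l : B) (m n : ℕ) :
    alternatingWord k l (m + n) =
      alternatingWord (if Even n then k else l) (if Even n then l else k) m
        ++ alternatingWord k l n := by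
  induction m with
  | zero => simp [alternatingWord]
  | succ m ih =>
      have h : m + 1 + n = (m + n) + 1 := by omega
      rw [h, alternatingWord_succ', ih, alternatingWord_succ', ← List.cons_append]
      congr 1
      rcases Nat.even_or_odd n with hn | hn <;> rcases Nat.even_or_odd m with hm | hm
      · simp [Nat.even_add, hn, hm]
      · have hm' : ¬ Even m := Nat.not_even_iff_odd.mpr hm
        simp [Nat.even_add, hn, hm']
      · have hn' : ¬ Even n := Nat.not_even_iff_odd.mpr hn
        simp [Nat.even_add, hn', hm]
      · have hm' : ¬ Even m := Nat.not_even_iff_odd.mpr hm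
        have hn' : ¬ Even n := Nat.not_even_iff_odd.mpr hn
        simp [Nat.even_add, hn', hm']

theorem stmt4_rightInvSeq_cons' (i : B) (ω : List B) :
    cs.rightInvSeq (i :: ω) =
      ((cs.wordProd ω)⁻¹ * cs.simple i * cs.wordProd ω) :: cs.rightInvSeq ω := rfl

theorem stmt4_rightInvSeq_alternatingWord (k l : B) (n : ℕ) :
    cs.rightInvSeq (alternatingWord k l n) =
      (List.range n).reverse.map
        (fun r => (cs.wordProd (alternatingWord k l r))⁻¹
          * cs.wordProd (alternatingWord k l (r + 1))) := by
  induction n with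
  | zero => simp [alternatingWord]
  | succ n ih =>
      rw [alternatingWord_succ', stmt4_rightInvSeq_cons', ih, List.range_succ,
        List.reverse_append]
      simp only [List.reverse_cons, List.reverse_nil, List.nil_append, List.map_cons,
        List.cons_append, List.singleton_append]
      congr 1
      rw [alternatingWord_succ', wordProd_cons]
      group

theorem stmt4_wordProd_alt_add (k l : B) (r : ℕ) :
    cs.wordProd (alternatingWord k l (M k l + r)) =
      cs.wordProd (alternatingWord k l (M k l)) * cs.wordProd (alternatingWord k l r) := by
  rw [stmt4_alternatingWord_add k l (M k l) r, wordProd_append]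
  rcases Nat.even_or_odd r with hr | hr
  · rw [if_pos hr, if_pos hr]
  · rw [if_neg (Nat.not_even_iff_odd.mpr hr), if_neg (Nat.not_even_iff_odd.mpr hr)]
    congr 1
    have h2 : M k l = M l k := M.symmetric k l
    conv_lhs => rw [h2]
    exact cs.wordProd_braidWord_eq l k

theorem stmt4_count_even (k l : B) (u : W) :
    ∃ r, (cs.rightInvSeq (alternatingWord k l (2 * M k l))).count u = 2 * r := by
  classical
  rw [stmt4_rightInvSeq_alternatingWord]
  set T : ℕ → W := fun r => (cs.wordProd (alternatingWord k l r))⁻¹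
      * cs.wordProd (alternatingWord k l (r + 1)) with hT
  have hTshift : ∀ r : ℕ, T (M k l + r) = T r := by
    intro r
    have h1 := cs.stmt4_wordProd_alt_add k l r
    have h2 := cs.stmt4_wordProd_alt_add k l (r + 1)
    simp only [hT]
    rw [show M k l + r + 1 = M k l + (r + 1) by omega, h1, h2]
    group
  rw [List.map_reverse, List.count_reverse, two_mul, List.range_add, List.map_append]
  rw [List.count_append]
  have : (List.map T (List.map (fun x => M k l + x) (List.range (M k l)))) =
      List.map T (List.range (M k l)) := by
    rw [List.map_map]
    apply List.map_congr_left
    intro x _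
    exact hTshift x
  rw [this]
  exact ⟨_, (two_mul _).symm⟩

theorem stmt4_isLiftable : M.IsLiftable (cs.stmt4Tau) := by
  intro k l
  apply Equiv.ext
  rintro ⟨u, e⟩
  rw [← stmt4_prod_map_alternatingWord cs.stmt4Tau k l (M k l)]
  rw [cs.stmt4_prod_map_tau]
  have h2 : cs.wordProd (alternatingWord k l (2 * M k l)) = 1 := by
    rw [prod_alternatingWord_eq_mul_pow]
    rw [if_pos (even_two_mul _)]
    rw [Nat.mul_div_cancel_left _ (by norm_num)]
    rw [cs.simple_mul_simple_pow]
    simp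
  obtain ⟨r, hr⟩ := cs.stmt4_count_even k l u
  have h0 : ((2 * r : ℕ) : ZMod 2) = 0 := by
    push_cast
    have : (2 : ZMod 2) = 0 := by decide
    rw [this, zero_mul]
  rw [h2, hr, h0]
  simp

noncomputable def stmt4Phi : W →* Equiv.Perm (W × ZMod 2) :=
  cs.lift ⟨cs.stmt4Tau, cs.stmt4_isLiftable⟩

theorem stmt4Phi_simple (i : B) : cs.stmt4Phi (cs.simple i) = cs.stmt4Tau i :=
  cs.lift_apply_simple (cs.stmt4_isLiftable) i

theorem stmt4Phi_wordProd (ω : List B) :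
    cs.stmt4Phi (cs.wordProd ω) = (List.map (cs.stmt4Tau) ω).prod := by
  induction ω with
  | nil => simp [wordProd_nil]
  | cons i ω ih =>
      rw [wordProd_cons, map_mul, ih, stmt4Phi_simple, List.map_cons, List.prod_cons]

/-- The sign invariant: `nn w u` is the parity of the number of occurrences of `u` in the
right inversion sequence of any word for `w`. -/
noncomputable def stmt4N (w u : W) : ZMod 2 := (cs.stmt4Phi w (u, 0)).2

theorem stmt4N_eq_count {ω : List B} {w : W} (hw : cs.wordProd ω = w) (u : W) :
    cs.stmt4N w u = (((cs.rightInvSeq ω).count u : ℕ) : ZMod 2) := by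
  rw [stmt4N, ← hw, stmt4Phi_wordProd, stmt4_prod_map_tau, zero_add]

theorem stmt4Phi_snd (w u : W) (e : ZMod 2) :
    (cs.stmt4Phi w (u, e)).2 = e + cs.stmt4N w u := by
  obtain ⟨ω, hω⟩ := cs.wordProd_surjective w
  rw [← hω, stmt4Phi_wordProd, stmt4_prod_map_tau, stmt4N_eq_count cs rfl]

theorem stmt4N_mul_simple (w : W) (k : B) (u : W) :
    cs.stmt4N (w * cs.simple k) u =
      (if u = cs.simple k then 1 else 0) + cs.stmt4N w (cs.simple k * u * cs.simple k) := by
  rw [stmt4N, map_mul, Equiv.Perm.mul_apply, stmt4Phi_simple, stmt4Tau_apply, zero_add,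
    stmt4Phi_snd]

theorem stmt4_isRightDescent_iff (w : W) (k : B) :
    cs.IsRightDescent w k ↔ cs.stmt4N w (cs.simple k) = 1 := by
  constructor
  · intro h
    obtain ⟨α, hlen, hα⟩ := cs.exists_reduced_word (w * cs.simple k)
    set ω : List B := α.concat k with hω
    have hπ : cs.wordProd ω = w := by
      rw [hω, wordProd_concat, ← hα, simple_mul_simple_cancel_right]
    have hred : cs.IsReduced ω := by
      unfold IsReduced
      rw [hπ, hω, List.length_concat, ← (hlen : cs.length (cs.wordProd α) = α.length), ← hα]
      exact (cs.isRightDescent_iff.mp h).symm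
    have hmem : cs.simple k ∈ cs.rightInvSeq ω := by
      rw [hω, cs.rightInvSeq_concat]
      simp
    rw [stmt4N_eq_count cs hπ, List.count_eq_one_of_mem hred.nodup_rightInvSeq hmem]
    norm_num
  · intro h
    obtain ⟨ω, hred, hπ⟩ := cs.exists_reduced_word' w
    rw [stmt4N_eq_count cs hπ.symm] at h
    have hmem : cs.simple k ∈ cs.rightInvSeq ω := by
      by_contra hc
      rw [List.count_eq_zero_of_not_mem hc] at h
      norm_num at h
    have := cs.isRightInversion_of_mem_rightInvSeq hred hmem
    rw [hπ]
    exact this.2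


theorem stmt4_zhelp : ∀ a b c : ZMod 2, Xor' (a = 1) (b = 1) →
    (c = a → (Xor' (1 + a = 1) (c = 1) ∧ ¬ Xor' (c = 1) (1 + b = 1))) ∧
    (c ≠ a → (Xor' (c = 1) (1 + b = 1) ∧ ¬ Xor' (1 + a = 1) (c = 1))) := by
  unfold Xor'; decide

end CoxeterSystem

/-- Let `(W,S)` be a Coxeter system and `s = s_i`, `t = s_j` with `st` of order `3`.
For every `w ∈ D_R(s,t)`, the set `{ws, wt} ∩ D_R(s,t)` consists of exactly one
element, denoted `w*`; moreover `w ↦ w*` is an involution of `D_R(s,t)` (i.e. `w*` again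
lies in `D_R(s,t)` and `(w*)* = w`). -/
theorem stmt4 {B W : Type*} [Group W] {M : CoxeterMatrix B} (cs : CoxeterSystem M W)
    (i j : B) (hm : orderOf (cs.simple i * cs.simple j) = 3) :
    (∀ w ∈ {w : W | Xor' (cs.IsRightDescent w i) (cs.IsRightDescent w j)},
      ∃! z : W, z ∈ ({w * cs.simple i, w * cs.simple j} : Set W) ∩
        {w : W | Xor' (cs.IsRightDescent w i) (cs.IsRightDescent w j)}) ∧
    ∀ w ∈ {w : W | Xor' (cs.IsRightDescent w i) (cs.IsRightDescent w j)},
      ∀ z ∈ ({w * cs.simple i, w * cs.simple j} : Set W) ∩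
        {w : W | Xor' (cs.IsRightDescent w i) (cs.IsRightDescent w j)},
        w ∈ ({z * cs.simple i, z * cs.simple j} : Set W) ∩
          {w : W | Xor' (cs.IsRightDescent w i) (cs.IsRightDescent w j)} := by
  have hm3 : (cs.simple i * cs.simple j) ^ 3 = 1 := by
    rw [← hm]; exact pow_orderOf_eq_one _
  have hst : cs.simple i ≠ cs.simple j := by
    intro h
    have h1 : cs.simple i * cs.simple j = 1 := by rw [← h]; exact cs.simple_mul_simple_self i
    rw [h1, orderOf_one] at hm
    omega
  have hbraid : cs.simple i * cs.simple j * cs.simple i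
      = cs.simple j * cs.simple i * cs.simple j := by
    have h1 : (cs.simple i * cs.simple j * cs.simple i)
        * (cs.simple j * cs.simple i * cs.simple j) = (cs.simple i * cs.simple j) ^ 3 := by
      rw [pow_succ, pow_succ, pow_one]
      simp [mul_assoc]
    have h2 : (cs.simple i * cs.simple j * cs.simple i)
        * (cs.simple j * cs.simple i * cs.simple j) = 1 := h1.trans hm3
    have h3 := eq_inv_of_mul_eq_one_left h2
    have h4 : (cs.simple j * cs.simple i * cs.simple j)⁻¹
        = cs.simple j * cs.simple i * cs.simple j := by
      simp [mul_inv_rev, mul_assoc]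
    rw [h4] at h3
    exact h3
  -- the sign invariants
  have hsss : cs.simple i * cs.simple i * cs.simple i = cs.simple i := by simp
  have httt : cs.simple j * cs.simple j * cs.simple j = cs.simple j := by simp
  have n1 : ∀ w : W, cs.stmt4N (w * cs.simple i) (cs.simple i)
      = 1 + cs.stmt4N w (cs.simple i) := by
    intro w
    rw [cs.stmt4N_mul_simple, if_pos rfl, hsss]
  have n2 : ∀ w : W, cs.stmt4N (w * cs.simple i) (cs.simple j)
      = cs.stmt4N w (cs.simple i * cs.simple j * cs.simple i) := by
    intro w
    rw [cs.stmt4N_mul_simple, if_neg hst.symm, zero_add]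
  have n3 : ∀ w : W, cs.stmt4N (w * cs.simple j) (cs.simple i)
      = cs.stmt4N w (cs.simple i * cs.simple j * cs.simple i) := by
    intro w
    rw [cs.stmt4N_mul_simple, if_neg hst, zero_add, ← hbraid]
  have n4 : ∀ w : W, cs.stmt4N (w * cs.simple j) (cs.simple j)
      = 1 + cs.stmt4N w (cs.simple j) := by
    intro w
    rw [cs.stmt4N_mul_simple, if_pos rfl, httt]
  have hD : ∀ w : W,
      (w ∈ {w : W | Xor' (cs.IsRightDescent w i) (cs.IsRightDescent w j)}) ↔
        Xor' (cs.stmt4N w (cs.simple i) = 1) (cs.stmt4N w (cs.simple j) = 1) := by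
    intro w
    rw [Set.mem_setOf_eq, cs.stmt4_isRightDescent_iff w i, cs.stmt4_isRightDescent_iff w j]
  constructor
  · intro w hw
    have hw' := (hD w).mp hw
    have hkey := CoxeterSystem.stmt4_zhelp (cs.stmt4N w (cs.simple i))
      (cs.stmt4N w (cs.simple j)) (cs.stmt4N w (cs.simple i * cs.simple j * cs.simple i)) hw'
    by_cases hca : cs.stmt4N w (cs.simple i * cs.simple j * cs.simple i)
        = cs.stmt4N w (cs.simple i)
    · obtain ⟨hws, hwt⟩ := hkey.1 hca
      refine ⟨w * cs.simple i, ⟨Set.mem_insert _ _, ?_⟩, ?_⟩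
      · rw [hD]
        rw [n1, n2]
        exact hws
      · rintro y ⟨hy1, hy2⟩
        rcases Set.mem_insert_iff.mp hy1 with rfl | hy3
        · rfl
        · rw [Set.mem_singleton_iff.mp hy3] at hy2 ⊢
          exfalso
          apply hwt
          have := (hD _).mp hy2
          rwa [n3, n4] at this
    · obtain ⟨hwt, hws⟩ := hkey.2 hca
      refine ⟨w * cs.simple j, ⟨Set.mem_insert_of_mem _ rfl, ?_⟩, ?_⟩
      · rw [hD]
        rw [n3, n4]
        exact hwt
      · rintro y ⟨hy1, hy2⟩
        rcases Set.mem_insert_iff.mp hy1 with rfl | hy3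
        · exfalso
          apply hws
          have := (hD _).mp hy2
          rwa [n1, n2] at this
        · exact Set.mem_singleton_iff.mp hy3
  · intro w hw z hz
    obtain ⟨hz1, _⟩ := hz
    refine ⟨?_, hw⟩
    rcases Set.mem_insert_iff.mp hz1 with rfl | hz3
    · apply Set.mem_insert_iff.mpr
      left
      rw [simple_mul_simple_cancel_right]
    · rw [Set.mem_singleton_iff.mp hz3]
      apply Set.mem_insert_iff.mpr
      right
      apply Set.mem_singleton_iff.mpr
      rw [simple_mul_simple_cancel_right]
end

section
/- Let (W,S) be a Coxeter system and s,t ∈ S with st of finite order m ≥ 3. Define a map on D_R(s,t) by sending w, the i-th element of its string λ_w, to the (m−i)-th element of λ_w, denoted w̃. Then w ↦ w̃ is a well-defined involution of D_R(s,t). -/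
open CoxeterSystem

/-- The alternating product `s_i s_j s_i ⋯` with `k` factors, starting with `s_i`. -/
def altP {B W : Type*} [Group W] {M : CoxeterMatrix B} (cs : CoxeterSystem M W)
    (i j : B) : ℕ → W
  | 0 => 1
  | (k + 1) => altP cs i j k * (if Even k then cs.simple i else cs.simple j)


open CoxeterSystem List

namespace StmtAux

variable {B W : Type*} [Group W] {M : CoxeterMatrix B} (cs : CoxeterSystem M W)

open scoped Classical

/-- conjugation-equality helper -/
private lemma conj_eq_iff (a u v : W) : a * u * a⁻¹ = v ↔ a⁻¹ * v * a = u := by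
  constructor <;> (rintro rfl; group)

/-- The permutation of `W × ZMod 2` associated to a simple generator. -/
noncomputable def etaP (i : B) : Equiv.Perm (W × ZMod 2) :=
  Function.Involutive.toPerm
    (fun q => (cs.simple i * q.1 * cs.simple i, q.2 + if q.1 = cs.simple i then 1 else 0))
    (by
      rintro ⟨t, ε⟩
      dsimp only
      have hassoc : cs.simple i * (cs.simple i * t * cs.simple i) * cs.simple i = t := by
        rw [show cs.simple i * (cs.simple i * t * cs.simple i) * cs.simple i
            = cs.simple i * cs.simple i * t * (cs.simple i * cs.simple i) from by
              simp [mul_assoc]]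
        simp [cs.simple_mul_simple_self]
      have hiff : (cs.simple i * t * cs.simple i = cs.simple i) ↔ t = cs.simple i := by
        constructor
        · intro hc
          have h2 := congrArg (fun z => cs.simple i * z * cs.simple i) hc
          rw [hassoc] at h2
          rw [h2, show cs.simple i * cs.simple i * cs.simple i = cs.simple i from by
            rw [cs.simple_mul_simple_self, one_mul]]
        · rintro rfl
          rw [cs.simple_mul_simple_self, one_mul]
      rw [Prod.mk.injEq]
      constructor
      · exact hassoc
      · by_cases h : t = cs.simple i
        · rw [if_pos h, if_pos (hiff.mpr h), add_assoc,
            show (1 : ZMod 2) + 1 = 0 from by decide, add_zero]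
        · rw [if_neg h, if_neg (fun hc => h (hiff.mp hc)), add_zero, add_zero])

lemma etaP_apply (i : B) (t : W) (ε : ZMod 2) :
    etaP cs i (t, ε) =
      (cs.simple i * t * cs.simple i, ε + if t = cs.simple i then 1 else 0) := rfl

private lemma sum_range_add' {β : Type*} [AddCommMonoid β] (f : ℕ → β) (a b : ℕ) :
    ∑ e ∈ Finset.range (a + b), f e =
      (∑ e ∈ Finset.range a, f e) + ∑ e ∈ Finset.range b, f (a + e) := by
  induction b with
  | zero => simp
  | succ b ih =>
      rw [show a + (b + 1) = (a + b) + 1 from rfl, Finset.sum_range_succ, ih,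
        Finset.sum_range_succ, add_assoc]

lemma etaP_mul_pow (i j : B) (n : ℕ) (t : W) (ε : ZMod 2) :
    ((etaP cs i * etaP cs j) ^ n) (t, ε) =
      ((cs.simple i * cs.simple j) ^ n * t * (cs.simple j * cs.simple i) ^ n,
        ε + ∑ e ∈ Finset.range (2 * n),
          if (cs.simple j * cs.simple i) ^ e * cs.simple j = t then 1 else 0) := by
  induction n generalizing t ε with
  | zero => simp
  | succ n ih =>
      have hstep : ((etaP cs i * etaP cs j) ^ (n + 1)) (t, ε) =
          ((etaP cs i * etaP cs j) ^ n) ((etaP cs i * etaP cs j) (t, ε)) := by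
        rw [pow_succ]; rfl
      have happ : (etaP cs i * etaP cs j) (t, ε) =
          (cs.simple i * (cs.simple j * t * cs.simple j) * cs.simple i,
            ε + (if t = cs.simple j then 1 else 0)
              + (if cs.simple j * t * cs.simple j = cs.simple i then 1 else 0)) := by
        rfl
      rw [hstep, happ, ih, Prod.mk.injEq]
      constructor
      · -- first components
        show (cs.simple i * cs.simple j) ^ n *
            (cs.simple i * (cs.simple j * t * cs.simple j) * cs.simple i) *
            (cs.simple j * cs.simple i) ^ n = _
        rw [show (cs.simple i * cs.simple j) ^ n *
            (cs.simple i * (cs.simple j * t * cs.simple j) * cs.simple i) *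
            (cs.simple j * cs.simple i) ^ n =
            ((cs.simple i * cs.simple j) ^ n * (cs.simple i * cs.simple j)) * t *
            ((cs.simple j * cs.simple i) * (cs.simple j * cs.simple i) ^ n) from by
          simp [mul_assoc]]
        rw [← pow_succ, ← pow_succ']
      · -- second components
        show ε + (if t = cs.simple j then 1 else 0)
              + (if cs.simple j * t * cs.simple j = cs.simple i then 1 else 0)
              + ∑ e ∈ Finset.range (2 * n),
                (if (cs.simple j * cs.simple i) ^ e * cs.simple j =
                    cs.simple i * (cs.simple j * t * cs.simple j) * cs.simple i
                  then 1 else 0) = _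
        have hcond : ∀ e : ℕ,
            ((cs.simple j * cs.simple i) ^ e * cs.simple j =
              cs.simple i * (cs.simple j * t * cs.simple j) * cs.simple i) ↔
            ((cs.simple j * cs.simple i) ^ (e + 2) * cs.simple j = t) := by
          intro e
          have key : (cs.simple j * cs.simple i) ^ (e + 2) * cs.simple j =
              (cs.simple j * cs.simple i) *
                ((cs.simple j * cs.simple i) ^ e * cs.simple j) *
                (cs.simple i * cs.simple j) := by
            calc (cs.simple j * cs.simple i) ^ (e + 2) * cs.simple j
                = (cs.simple j * cs.simple i) * ((cs.simple j * cs.simple i) ^ e *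
                    ((cs.simple j * cs.simple i) * cs.simple j)) := by
                  rw [pow_succ, pow_succ', mul_assoc, mul_assoc]
              _ = _ := by simp [mul_assoc]
          constructor
          · intro h
            rw [key, h]
            simp [mul_assoc, cs.simple_mul_simple_cancel_left, cs.simple_mul_simple_self]
          · intro h
            rw [← h, key]
            simp [mul_assoc, cs.simple_mul_simple_cancel_left, cs.simple_mul_simple_self]
        have hsum : ∑ e ∈ Finset.range (2 * n),
            (if (cs.simple j * cs.simple i) ^ e * cs.simple j =
                cs.simple i * (cs.simple j * t * cs.simple j) * cs.simple i
              then (1 : ZMod 2) else 0) =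
            ∑ e ∈ Finset.range (2 * n),
            (if (cs.simple j * cs.simple i) ^ (e + 2) * cs.simple j = t
              then (1 : ZMod 2) else 0) := by
          refine Finset.sum_congr rfl fun e _ => ?_
          simp only [hcond e]
        rw [hsum]
        have expand : ∑ e ∈ Finset.range (2 * (n + 1)),
            (if (cs.simple j * cs.simple i) ^ e * cs.simple j = t then (1 : ZMod 2) else 0) =
            (∑ e ∈ Finset.range (2 * n),
              (if (cs.simple j * cs.simple i) ^ (e + 2) * cs.simple j = t
                then (1 : ZMod 2) else 0))
            + (if (cs.simple j * cs.simple i) ^ 1 * cs.simple j = t then (1 : ZMod 2) else 0)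
            + (if (cs.simple j * cs.simple i) ^ 0 * cs.simple j = t then (1 : ZMod 2) else 0) := by
          rw [show 2 * (n + 1) = (2 * n + 1) + 1 from by ring, Finset.sum_range_succ' _ (2 * n + 1),
            Finset.sum_range_succ' _ (2 * n)]
        rw [expand]
        have h0 : (if (cs.simple j * cs.simple i) ^ 0 * cs.simple j = t then (1 : ZMod 2) else 0)
            = (if t = cs.simple j then 1 else 0) := by
          simp [eq_comm]
        have h1 : (if (cs.simple j * cs.simple i) ^ 1 * cs.simple j = t then (1 : ZMod 2) else 0)
            = (if cs.simple j * t * cs.simple j = cs.simple i then 1 else 0) := by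
          have : ((cs.simple j * cs.simple i) ^ 1 * cs.simple j = t) ↔
              (cs.simple j * t * cs.simple j = cs.simple i) := by
            rw [pow_one]
            constructor
            · rintro rfl
              simp [mul_assoc, cs.simple_mul_simple_cancel_left, cs.simple_mul_simple_self]
            · intro h
              have := congrArg (fun z => cs.simple j * z * cs.simple j) h
              rw [← this]
              simp [mul_assoc, cs.simple_mul_simple_cancel_left, cs.simple_mul_simple_self]
          simp only [this]
        rw [h0, h1]
        ring

theorem etaP_liftable : M.IsLiftable (fun i => etaP cs i) := by
  intro i j
  rcases eq_or_ne (M i j) 0 with h | h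
  · rw [h, pow_zero]
  · refine Equiv.ext fun q => ?_
    obtain ⟨t, ε⟩ := q
    have hsum : ∑ e ∈ Finset.range (2 * M i j),
        (if (cs.simple j * cs.simple i) ^ e * cs.simple j = t then (1 : ZMod 2) else 0) = 0 := by
      rw [show 2 * M i j = M i j + M i j from by ring, sum_range_add']
      have : ∀ e ∈ Finset.range (M i j),
          (if (cs.simple j * cs.simple i) ^ (M i j + e) * cs.simple j = t
            then (1 : ZMod 2) else 0) =
          (if (cs.simple j * cs.simple i) ^ e * cs.simple j = t then (1 : ZMod 2) else 0) := by
        intro e _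
        rw [pow_add, cs.simple_mul_simple_pow' i j, one_mul]
      rw [Finset.sum_congr rfl this]
      have h2 : ∀ x : ZMod 2, x + x = 0 := by decide
      exact h2 _
    have hmp := etaP_mul_pow cs i j (M i j) t ε
    rw [cs.simple_mul_simple_pow i j, cs.simple_mul_simple_pow' i j, hsum, one_mul, mul_one,
      add_zero] at hmp
    simpa using hmp

/-- The parity representation of the Coxeter group. -/
noncomputable def rrep : W →* Equiv.Perm (W × ZMod 2) :=
  cs.lift ⟨fun i => etaP cs i, etaP_liftable cs⟩

lemma rrep_simple (i : B) : rrep cs (cs.simple i) = etaP cs i :=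
  cs.lift_apply_simple (etaP_liftable cs) i

/-- The number of occurrences (mod 2) of `t` in the right inversion sequence of `ω`. -/
noncomputable def invP (ω : List B) (t : W) : ZMod 2 :=
  ((cs.rightInvSeq ω).map (fun u => if u = t then 1 else 0)).sum

lemma invP_cons (c : B) (ω : List B) (t : W) :
    invP cs (c :: ω) t =
      (if (cs.wordProd ω)⁻¹ * cs.simple c * cs.wordProd ω = t then 1 else 0)
        + invP cs ω t := by
  simp [invP, CoxeterSystem.rightInvSeq]

theorem rrep_wordProd (ω : List B) (t : W) (ε : ZMod 2) :
    rrep cs (cs.wordProd ω) (t, ε) =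
      (cs.wordProd ω * t * (cs.wordProd ω)⁻¹, ε + invP cs ω t) := by
  induction ω generalizing t ε with
  | nil => simp [invP]
  | cons c ω ih =>
      rw [wordProd_cons, map_mul, Equiv.Perm.mul_apply, ih, rrep_simple, etaP_apply,
        invP_cons, Prod.mk.injEq]
      constructor
      · show cs.simple c * (cs.wordProd ω * t * (cs.wordProd ω)⁻¹) * cs.simple c = _
        rw [mul_inv_rev, cs.inv_simple]
        simp [mul_assoc]
      · show ε + invP cs ω t +
            (if cs.wordProd ω * t * (cs.wordProd ω)⁻¹ = cs.simple c then 1 else 0) = _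
        have : (cs.wordProd ω * t * (cs.wordProd ω)⁻¹ = cs.simple c) ↔
            ((cs.wordProd ω)⁻¹ * cs.simple c * cs.wordProd ω = t) := by
          rw [conj_eq_iff]
        simp only [this]
        ring

theorem invP_eq_of_wordProd_eq {ω ω' : List B} (h : cs.wordProd ω = cs.wordProd ω') (t : W) :
    invP cs ω t = invP cs ω' t := by
  have h1 := rrep_wordProd cs ω t 0
  have h2 := rrep_wordProd cs ω' t 0
  rw [h] at h1
  rw [h1] at h2
  have := (Prod.mk.injEq _ _ _ _).mp h2
  simpa using this.2

private lemma list_sum_zero {t : W} {l : List W} (h : t ∉ l) :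
    (l.map (fun u => if u = t then (1 : ZMod 2) else 0)).sum = 0 := by
  induction l with
  | nil => simp
  | cons u l ih =>
      simp only [List.mem_cons, not_or] at h
      simp [Ne.symm h.1, ih h.2, (by simpa [eq_comm] using h.1 : ¬ u = t)]

private lemma list_sum_one {t : W} {l : List W} (hn : l.Nodup) (h : t ∈ l) :
    (l.map (fun u => if u = t then (1 : ZMod 2) else 0)).sum = 1 := by
  induction l with
  | nil => simp at h
  | cons u l ih =>
      rw [List.nodup_cons] at hn
      rcases List.mem_cons.mp h with rfl | hmem
      · simp [list_sum_zero hn.1]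
      · have hune : ¬ u = t := fun hc => hn.1 (hc ▸ hmem)
        simp [hune, ih hn.2 hmem]

theorem simple_mem_rightInvSeq_of_isRightDescent {w : W} {c : B}
    (hw : cs.IsRightDescent w c) {ω : List B} (hω : cs.wordProd ω = w) :
    cs.simple c ∈ cs.rightInvSeq ω := by
  obtain ⟨ω₀, hlen, hprod⟩ := cs.exists_reduced_word (w * cs.simple c)
  have hπ1 : cs.wordProd (ω₀ ++ [c]) = w := by
    rw [wordProd_append, wordProd_singleton, ← hprod, cs.simple_mul_simple_cancel_right]
  have hred : cs.IsReduced (ω₀ ++ [c]) := by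
    unfold CoxeterSystem.IsReduced
    rw [hπ1]
    have := (cs.isRightDescent_iff).mp hw
    simp only [List.length_append, List.length_singleton, ← hlen.eq, ← hprod]
    omega
  have hmem1 : cs.simple c ∈ cs.rightInvSeq (ω₀ ++ [c]) := by
    rw [← List.concat_eq_append, cs.rightInvSeq_concat]
    simp
  have h1 : invP cs (ω₀ ++ [c]) (cs.simple c) = 1 :=
    list_sum_one (hred.nodup_rightInvSeq) hmem1
  have h2 : invP cs ω (cs.simple c) = 1 := by
    rw [invP_eq_of_wordProd_eq cs (by rw [hω, hπ1] : cs.wordProd ω = cs.wordProd (ω₀ ++ [c]))]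
    exact h1
  by_contra hnot
  rw [show invP cs ω (cs.simple c) =
    ((cs.rightInvSeq ω).map (fun u => if u = cs.simple c then 1 else 0)).sum from rfl,
    list_sum_zero hnot] at h2
  exact zero_ne_one h2

/-- Exchange property. -/
theorem exchange {w : W} {c : B} (hw : cs.IsRightDescent w c) {ω : List B}
    (hω : cs.wordProd ω = w) :
    ∃ r, r < ω.length ∧ w * cs.simple c = cs.wordProd (ω.eraseIdx r) := by
  have hmem := simple_mem_rightInvSeq_of_isRightDescent cs hw hω
  rw [List.mem_iff_getElem] at hmem
  obtain ⟨r, hr, hget⟩ := hmem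
  rw [cs.length_rightInvSeq] at hr
  refine ⟨r, hr, ?_⟩
  have := cs.wordProd_mul_getD_rightInvSeq ω r
  rw [List.getD_eq_getElem _ _ (by rwa [cs.length_rightInvSeq]), hget, hω] at this
  exact this

end StmtAux

namespace StmtAux

variable {B W : Type*} [Group W] {M : CoxeterMatrix B} (cs : CoxeterSystem M W)

lemma altP_zero (i j : B) : altP cs i j 0 = 1 := rfl

lemma altP_succ (i j : B) (k : ℕ) :
    altP cs i j (k + 1) = altP cs i j k * (if Even k then cs.simple i else cs.simple j) := rfl

/-- The alternating word `[i, j, i, ...]` of length `k`. -/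
def altW (i j : B) : ℕ → List B
  | 0 => []
  | (k + 1) => altW i j k ++ [if Even k then i else j]

lemma altW_length (i j : B) (k : ℕ) : (altW i j k).length = k := by
  induction k with
  | zero => rfl
  | succ k ih => simp [altW, ih]

lemma altW_mem (i j : B) (k : ℕ) : ∀ c ∈ altW i j k, c = i ∨ c = j := by
  induction k with
  | zero => simp [altW]
  | succ k ih =>
      intro c hc
      rw [altW, List.mem_append] at hc
      rcases hc with hc | hc
      · exact ih c hc
      · rw [List.mem_singleton] at hc
        subst hc
        split <;> simp

lemma wordProd_altW (i j : B) (k : ℕ) : cs.wordProd (altW i j k) = altP cs i j k := by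
  induction k with
  | zero => simp [altW, altP_zero]
  | succ k ih =>
      rw [altW, wordProd_append, ih, altP_succ, wordProd_singleton, apply_ite cs.simple]

lemma altP_eq (i j : B) (k : ℕ) : altP cs i j k =
    (cs.simple i * cs.simple j) ^ (k / 2) * (if Even k then 1 else cs.simple i) := by
  induction k with
  | zero => simp [altP_zero]
  | succ k ih =>
      rw [altP_succ, ih]
      by_cases he : Even k
      · have h2 : (k + 1) / 2 = k / 2 := by
          have := Nat.even_iff.mp he; omega
        have ho : ¬ Even (k + 1) := by simp [Nat.even_add_one, he]
        rw [if_pos he, if_pos he, if_neg ho, mul_one, h2]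
      · have h2 : (k + 1) / 2 = k / 2 + 1 := by
          have := Nat.odd_iff.mp (Nat.not_even_iff_odd.mp he); omega
        have ho : Even (k + 1) := by simp [Nat.even_add_one, he]
        rw [if_neg he, if_neg he, if_pos ho, h2, mul_one, pow_succ, mul_assoc]

lemma altP_zpow (i j : B) (k : ℕ) : altP cs i j k =
    (cs.simple i * cs.simple j) ^ ((k / 2 : ℕ) : ℤ) * (if Even k then 1 else cs.simple i) := by
  rw [altP_eq, zpow_natCast]

lemma altP_swap_zpow (i j : B) (k : ℕ) : altP cs j i k =
    (cs.simple i * cs.simple j) ^ (-((k / 2 : ℕ) : ℤ)) * (if Even k then 1 else cs.simple j) := by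
  rw [altP_eq]
  congr 1
  have hinv : cs.simple j * cs.simple i = (cs.simple i * cs.simple j)⁻¹ := by
    rw [mul_inv_rev, cs.inv_simple, cs.inv_simple]
  rw [hinv, inv_pow, ← zpow_natCast, ← zpow_neg]

lemma lengthParity_altP (i j : B) (k : ℕ) :
    cs.lengthParity (altP cs i j k) = Multiplicative.ofAdd (k : ZMod 2) := by
  induction k with
  | zero => simp [altP_zero]
  | succ k ih =>
      rw [altP_succ, map_mul, ih]
      have h1 : cs.lengthParity (if Even k then cs.simple i else cs.simple j)
          = Multiplicative.ofAdd (1 : ZMod 2) := by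
        split <;> rw [cs.lengthParity_simple]
      rw [h1, ← ofAdd_add]
      congr 1
      push_cast
      ring

private lemma zpow_cancel {x : W} {a c : ℤ} (h : x ^ a = x ^ c) : x ^ (a - c) = 1 := by
  simp [zpow_sub, h]

private lemma key_mixed {i j : B} {a c : ℤ}
    (h : (cs.simple i * cs.simple j) ^ a * cs.simple i
        = (cs.simple i * cs.simple j) ^ c * cs.simple j) :
    (cs.simple i * cs.simple j) ^ (a - c + 1) = 1 := by
  have e1 : (cs.simple i * cs.simple j) ^ (a - c + 1) =
      (cs.simple i * cs.simple j) ^ (-c) *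
        ((cs.simple i * cs.simple j) ^ a * cs.simple i) * cs.simple j := by
    rw [show a - c + 1 = -c + a + 1 from by ring, zpow_add, zpow_add, zpow_one]
    simp [mul_assoc]
  rw [e1, h, show (cs.simple i * cs.simple j) ^ (-c) *
      ((cs.simple i * cs.simple j) ^ c * cs.simple j) * cs.simple j
      = ((cs.simple i * cs.simple j) ^ (-c) * (cs.simple i * cs.simple j) ^ c) *
        (cs.simple j * cs.simple j) from by simp [mul_assoc],
    ← zpow_add, neg_add_cancel, zpow_zero, one_mul, cs.simple_mul_simple_self]

private lemma dvd_bound {m : ℕ} (hm0 : 0 < m) {V : ℤ} (h : (m : ℤ) ∣ V)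
    (h1 : -(m : ℤ) ≤ V) (h2 : V ≤ m) : V = -(m : ℤ) ∨ V = 0 ∨ V = m := by
  obtain ⟨c, rfl⟩ := h
  have hm0' : (0 : ℤ) < m := by exact_mod_cast hm0
  have hc1 : -1 ≤ c := by nlinarith
  have hc2 : c ≤ 1 := by nlinarith
  interval_cases c <;> omega

section core

variable {i j : B} {m : ℕ}

/-- `altB b k` is the `k`-th element of the string starting with `s i` (if `b`) or `s j`. -/
def altB (i j : B) (b : Bool) (k : ℕ) : W :=
  if b then altP cs i j k else altP cs j i k

lemma altB_true (k : ℕ) : altB cs i j true k = altP cs i j k := rfl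
lemma altB_false (k : ℕ) : altB cs i j false k = altP cs j i k := rfl

variable (hm : orderOf (cs.simple i * cs.simple j) = m)

include hm

private lemma hzdvd : ∀ z : ℤ, (cs.simple i * cs.simple j) ^ z = 1 → (m : ℤ) ∣ z := by
  intro z h
  rw [← hm]
  exact_mod_cast orderOf_dvd_iff_zpow_eq_one.mpr h

private lemma hpm : (cs.simple i * cs.simple j) ^ (m : ℤ) = 1 := by
  rw [zpow_natCast, ← hm, pow_orderOf_eq_one]

/-- The key injectivity property of the elements `altB b k`, `k ≤ m`. -/
theorem alt_core (hm0 : 0 < m) (b b' : Bool) {n l : ℕ} (hn : n ≤ m) (hl : l ≤ m)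
    (h : altB cs i j b n = altB cs i j b' l) :
    n = l ∧ (b = b' ∨ n = 0 ∨ n = m) := by
  have hmod : n % 2 = l % 2 := by
    have hP := congrArg cs.lengthParity h
    have e1 : cs.lengthParity (altB cs i j b n) = Multiplicative.ofAdd (n : ZMod 2) := by
      cases b <;> simp [altB_true, altB_false, lengthParity_altP]
    have e2 : cs.lengthParity (altB cs i j b' l) = Multiplicative.ofAdd (l : ZMod 2) := by
      cases b' <;> simp [altB_true, altB_false, lengthParity_altP]
    rw [e1, e2] at hP
    have h3 : (n : ZMod 2) = (l : ZMod 2) := Multiplicative.ofAdd.injective hP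
    exact (ZMod.natCast_eq_natCast_iff _ _ _).mp h3
  have hbounds : ((n / 2 : ℕ) : ℤ) ≤ m ∧ ((l / 2 : ℕ) : ℤ) ≤ m := by omega
  cases b <;> cases b' <;>
    simp only [altB_true, altB_false] at h
  -- case b = false, b' = false
  · rw [altP_swap_zpow, altP_swap_zpow] at h
    rcases Nat.even_or_odd n with hev | hod
    · have hevl : Even l := by rw [Nat.even_iff] at hev ⊢; omega
      rw [if_pos hev, if_pos hevl, mul_one, mul_one] at h
      have hd := dvd_bound hm0 (hzdvd cs hm _ (zpow_cancel h)) (by omega) (by omega)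
      exact ⟨by omega, Or.inl rfl⟩
    · have hodl : ¬ Even l := by rw [Nat.even_iff] at *; rw [Nat.odd_iff] at hod; omega
      rw [if_neg (Nat.not_even_iff_odd.mpr hod), if_neg hodl] at h
      have h' := mul_right_cancel h
      have hd := dvd_bound hm0 (hzdvd cs hm _ (zpow_cancel h')) (by omega) (by omega)
      exact ⟨by omega, Or.inl rfl⟩
  -- case b = false, b' = true
  · rw [altP_swap_zpow, altP_zpow] at h
    rcases Nat.even_or_odd n with hev | hod
    · have hevl : Even l := by rw [Nat.even_iff] at hev ⊢; omega
      rw [if_pos hev, if_pos hevl, mul_one, mul_one] at h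
      have h' := zpow_cancel h.symm
      have hd := dvd_bound hm0 (hzdvd cs hm _ h') (by omega) (by omega)
      have hnev := Nat.even_iff.mp hev
      refine ⟨by omega, Or.inr (by omega)⟩
    · have hodl : ¬ Even l := by rw [Nat.even_iff] at *; rw [Nat.odd_iff] at hod; omega
      rw [if_neg (Nat.not_even_iff_odd.mpr hod), if_neg hodl] at h
      have h' := key_mixed cs h.symm
      have hno := Nat.odd_iff.mp hod
      have hnol : l % 2 = 1 := by omega
      have hd := dvd_bound hm0 (hzdvd cs hm _ h') (by omega) (by omega)
      refine ⟨by omega, Or.inr (by omega)⟩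
  -- case b = true, b' = false
  · rw [altP_zpow, altP_swap_zpow] at h
    rcases Nat.even_or_odd n with hev | hod
    · have hevl : Even l := by rw [Nat.even_iff] at hev ⊢; omega
      rw [if_pos hev, if_pos hevl, mul_one, mul_one] at h
      have h' := zpow_cancel h
      have hd := dvd_bound hm0 (hzdvd cs hm _ h') (by omega) (by omega)
      have hnev := Nat.even_iff.mp hev
      refine ⟨by omega, Or.inr (by omega)⟩
    · have hodl : ¬ Even l := by rw [Nat.even_iff] at *; rw [Nat.odd_iff] at hod; omega
      rw [if_neg (Nat.not_even_iff_odd.mpr hod), if_neg hodl] at h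
      have h' := key_mixed cs h
      have hno := Nat.odd_iff.mp hod
      have hnol : l % 2 = 1 := by omega
      have hd := dvd_bound hm0 (hzdvd cs hm _ h') (by omega) (by omega)
      refine ⟨by omega, Or.inr (by omega)⟩
  -- case b = true, b' = true
  · rw [altP_zpow, altP_zpow] at h
    rcases Nat.even_or_odd n with hev | hod
    · have hevl : Even l := by rw [Nat.even_iff] at hev ⊢; omega
      rw [if_pos hev, if_pos hevl, mul_one, mul_one] at h
      have hd := dvd_bound hm0 (hzdvd cs hm _ (zpow_cancel h)) (by omega) (by omega)
      exact ⟨by omega, Or.inl rfl⟩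
    · have hodl : ¬ Even l := by rw [Nat.even_iff] at *; rw [Nat.odd_iff] at hod; omega
      rw [if_neg (Nat.not_even_iff_odd.mpr hod), if_neg hodl] at h
      have h' := mul_right_cancel h
      have hd := dvd_bound hm0 (hzdvd cs hm _ (zpow_cancel h')) (by omega) (by omega)
      exact ⟨by omega, Or.inl rfl⟩

/-- The two strings meet at the top: `altB b m = altB (¬b) m`. -/
theorem altP_top_eq (hm0 : 0 < m) : altP cs i j m = altP cs j i m := by
  rw [altP_zpow, altP_swap_zpow]
  by_cases hev : Even m
  · rw [if_pos hev, if_pos hev, mul_one, mul_one]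
    have hsum : (cs.simple i * cs.simple j) ^ ((m / 2 : ℕ) : ℤ) *
        (cs.simple i * cs.simple j) ^ ((m / 2 : ℕ) : ℤ) = 1 := by
      rw [← zpow_add, show ((m / 2 : ℕ) : ℤ) + ((m / 2 : ℕ) : ℤ) = (m : ℤ) from by
        have := Nat.even_iff.mp hev; omega]
      exact hpm cs hm
    rw [zpow_neg]
    exact eq_inv_of_mul_eq_one_left hsum
  · rw [if_neg hev, if_neg hev]
    have hsum : ((cs.simple i * cs.simple j) ^ ((m / 2 : ℕ) : ℤ) * (cs.simple i * cs.simple j)) *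
        (cs.simple i * cs.simple j) ^ ((m / 2 : ℕ) : ℤ) = 1 := by
      rw [show ((cs.simple i * cs.simple j) ^ ((m / 2 : ℕ) : ℤ) * (cs.simple i * cs.simple j)) *
          (cs.simple i * cs.simple j) ^ ((m / 2 : ℕ) : ℤ)
          = (cs.simple i * cs.simple j) ^ (((m / 2 : ℕ) : ℤ) + 1 + ((m / 2 : ℕ) : ℤ)) from by
        rw [zpow_add, zpow_add, zpow_one], show ((m / 2 : ℕ) : ℤ) + 1 + ((m / 2 : ℕ) : ℤ)
          = (m : ℤ) from by
        have := Nat.odd_iff.mp (Nat.not_even_iff_odd.mp hev); omega]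
      exact hpm cs hm
    have h3 : (cs.simple i * cs.simple j) ^ (-((m / 2 : ℕ) : ℤ)) =
        (cs.simple i * cs.simple j) ^ ((m / 2 : ℕ) : ℤ) * (cs.simple i * cs.simple j) := by
      rw [zpow_neg]
      have := eq_inv_of_mul_eq_one_left hsum
      rw [← this]
    rw [h3, mul_assoc]
    congr 1
    rw [mul_assoc, cs.simple_mul_simple_self, mul_one]

theorem altB_top_eq (hm0 : 0 < m) (b : Bool) : altB cs i j b m = altB cs i j (!b) m := by
  cases b
  · exact (altP_top_eq cs hm hm0).symm
  · exact altP_top_eq cs hm hm0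

end core

end StmtAux

namespace StmtAux

variable {B W : Type*} [Group W] {M : CoxeterMatrix B} (cs : CoxeterSystem M W)

section main

variable {i j : B} {m : ℕ}

lemma altB_zero (b : Bool) : altB cs i j b 0 = 1 := by cases b <;> rfl

/-- The next letter in the string. -/
def nxt (i j : B) (b : Bool) (l : ℕ) : B :=
  if b then (if Even l then i else j) else (if Even l then j else i)

lemma altB_succ (b : Bool) (l : ℕ) :
    altB cs i j b (l + 1) = altB cs i j b l * cs.simple (nxt i j b l) := by
  cases b <;> by_cases hl : Even l <;>
    simp [altB_true, altB_false, nxt, hl, altP_succ]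

lemma nxt_mem (b : Bool) (l : ℕ) : nxt i j b l = i ∨ nxt i j b l = j := by
  cases b <;> by_cases hl : Even l <;> simp [nxt, hl]

lemma nxt_flip (b : Bool) (l : ℕ) : nxt i j (!b) (l + 1) = nxt i j b l := by
  cases b <;> by_cases hl : Even l <;>
    simp [nxt, hl, Nat.even_add_one]

lemma nxt_pair (b : Bool) (l : ℕ) :
    (nxt i j b l = i ∧ nxt i j (!b) l = j) ∨ (nxt i j b l = j ∧ nxt i j (!b) l = i) := by
  cases b <;> by_cases hl : Even l <;> simp [nxt, hl]

variable (hm : orderOf (cs.simple i * cs.simple j) = m)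

include hm

/-- Any product of letters from `{i, j}` is some `altB b l` with `l ≤ m`. -/
theorem wordProd_eq_altB (hm0 : 0 < m) (δ : List B)
    (hδ : ∀ c ∈ δ, c = i ∨ c = j) :
    ∃ b l, l ≤ m ∧ l ≤ δ.length ∧ cs.wordProd δ = altB cs i j b l := by
  induction δ using List.reverseRecOn with
  | nil => exact ⟨true, 0, by omega, by simp, by simp [altB_true, altP_zero]⟩
  | append_singleton δ c ih =>
      obtain ⟨b, l, hlm, hld, hπ⟩ := ih (fun c hc => hδ c (by simp [hc]))
      have hc : c = i ∨ c = j := hδ c (by simp)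
      have hπ2 : cs.wordProd (δ ++ [c]) = altB cs i j b l * cs.simple c := by
        rw [wordProd_append, wordProd_singleton, hπ]
      by_cases hceq : c = nxt i j b l
      · rcases Nat.lt_or_ge l m with hlt | hge
        · refine ⟨b, l + 1, by omega, ?_, ?_⟩
          · simp only [List.length_append, List.length_singleton]
            omega
          · rw [hπ2, hceq, ← altB_succ]
        · have hlm' : m = l := le_antisymm hge hlm
          subst hlm'
          refine ⟨!b, m - 1, by omega, ?_, ?_⟩
          · simp only [List.length_append, List.length_singleton]
            omega
          · have h1 : nxt i j b m = nxt i j (!b) (m - 1) := by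
              have h2 := nxt_flip (i := i) (j := j) (!b) (m - 1)
              rw [Bool.not_not, show m - 1 + 1 = m from by omega] at h2
              exact h2
            have hsplit : altB cs i j (!b) m =
                altB cs i j (!b) (m - 1) * cs.simple (nxt i j (!b) (m - 1)) := by
              have h3 := altB_succ (cs := cs) (i := i) (j := j) (!b) (m - 1)
              rw [show m - 1 + 1 = m from by omega] at h3
              exact h3
            rw [hπ2, hceq, altB_top_eq cs hm hm0 b, h1, hsplit,
              cs.simple_mul_simple_cancel_right]
      · have hc2 : c = nxt i j (!b) l := by
          rcases nxt_pair (i := i) (j := j) b l with ⟨h1, h2⟩ | ⟨h1, h2⟩ <;>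
            rcases hc with rfl | rfl
          · exact absurd h1.symm hceq
          · exact h2.symm
          · exact h2.symm
          · exact absurd h1.symm hceq
        rcases Nat.eq_zero_or_pos l with rfl | hl1
        · refine ⟨!b, 1, by omega, by simp, ?_⟩
          rw [hπ2, hc2, altB_zero, one_mul,
            show (1 : ℕ) = 0 + 1 from rfl, altB_succ, altB_zero, one_mul]
        · refine ⟨b, l - 1, by omega, ?_, ?_⟩
          · simp only [List.length_append, List.length_singleton]
            omega
          · have h1 : nxt i j (!b) l = nxt i j b (l - 1) := by
              have h2 := nxt_flip (i := i) (j := j) b (l - 1)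
              rw [show l - 1 + 1 = l from by omega] at h2
              exact h2
            have hsplit : altB cs i j b l =
                altB cs i j b (l - 1) * cs.simple (nxt i j b (l - 1)) := by
              have h3 := altB_succ (cs := cs) (i := i) (j := j) b (l - 1)
              rw [show l - 1 + 1 = l from by omega] at h3
              exact h3
            rw [hπ2, hc2, h1, hsplit, cs.simple_mul_simple_cancel_right]

omit hm

lemma simple_mem_closure {c : B} (hc : c = i ∨ c = j) :
    cs.simple c ∈ Subgroup.closure {cs.simple i, cs.simple j} := by
  rcases hc with rfl | rfl <;> exact Subgroup.subset_closure (by simp)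

lemma wordProd_mem_closure (δ : List B) (hδ : ∀ c ∈ δ, c = i ∨ c = j) :
    cs.wordProd δ ∈ Subgroup.closure {cs.simple i, cs.simple j} := by
  induction δ with
  | nil => rw [wordProd_nil]; exact one_mem _
  | cons c δ ih =>
      rw [wordProd_cons]
      exact mul_mem (simple_mem_closure cs (hδ c (by simp)))
        (ih fun d hd => hδ d (List.mem_cons_of_mem _ hd))

lemma ifaltW_mem (b : Bool) (k : ℕ) :
    ∀ d ∈ (if b then altW i j k else altW j i k), d = i ∨ d = j := by
  cases b
  · intro d hd
    simp only [Bool.false_eq_true, if_neg] at hd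
    exact (altW_mem j i _ d hd).symm
  · intro d hd
    simp only [if_pos] at hd
    exact altW_mem i j _ d hd

lemma altB_eq_wordProd (b : Bool) (k : ℕ) :
    altB cs i j b k = cs.wordProd (if b then altW i j k else altW j i k) := by
  cases b <;> simp [altB_true, altB_false, wordProd_altW]

lemma altB_mem_closure (b : Bool) (k : ℕ) :
    altB cs i j b k ∈ Subgroup.closure {cs.simple i, cs.simple j} := by
  rw [altB_eq_wordProd]
  exact wordProd_mem_closure cs _ (ifaltW_mem b k)

theorem exists_word_of_mem_closure {u : W}
    (hu : u ∈ Subgroup.closure {cs.simple i, cs.simple j}) :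
    ∃ δ : List B, (∀ c ∈ δ, c = i ∨ c = j) ∧ u = cs.wordProd δ := by
  induction hu using Subgroup.closure_induction with
  | mem x hx =>
      simp only [Set.mem_insert_iff, Set.mem_singleton_iff] at hx
      rcases hx with rfl | rfl
      · exact ⟨[i], by simp, by simp⟩
      · exact ⟨[j], by simp, by simp⟩
  | one => exact ⟨[], by simp, by simp⟩
  | mul x y hx hy ihx ihy =>
      obtain ⟨δ1, h1, rfl⟩ := ihx
      obtain ⟨δ2, h2, rfl⟩ := ihy
      refine ⟨δ1 ++ δ2, ?_, by rw [wordProd_append]⟩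
      intro c hc
      rcases List.mem_append.mp hc with hc | hc
      · exact h1 c hc
      · exact h2 c hc
  | inv x hx ihx =>
      obtain ⟨δ, h1, rfl⟩ := ihx
      exact ⟨δ.reverse, fun c hc => h1 c (List.mem_reverse.mp hc), by rw [wordProd_reverse]⟩

include hm

/-- Key length formula: if `x` has minimal length in its coset `x⟨s_i,s_j⟩` then
the lengths go up along the strings. -/
theorem length_mul_altB (hm0 : 0 < m) (x : W)
    (hmin : ∀ u ∈ Subgroup.closure {cs.simple i, cs.simple j},
      cs.length x ≤ cs.length (x * u))
    (b : Bool) : ∀ k, k ≤ m → cs.length (x * altB cs i j b k) = cs.length x + k := by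
  intro k
  induction k with
  | zero => intro _; simp [altB_zero]
  | succ k ih =>
      intro hk1
      have ihk := ih (by omega)
      rw [altB_succ, ← mul_assoc]
      rcases cs.length_mul_simple (x * altB cs i j b k) (nxt i j b k) with hup | hdown
      · rw [hup, ihk]; omega
      · exfalso
        have hdesc : cs.IsRightDescent (x * altB cs i j b k) (nxt i j b k) := by
          show cs.length (x * altB cs i j b k * cs.simple (nxt i j b k))
              < cs.length (x * altB cs i j b k)
          omega
        obtain ⟨ωx, hωlen, hωprod⟩ := cs.exists_reduced_word x
        have hμprod : cs.wordProd (if b then altW i j k else altW j i k)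
            = altB cs i j b k := (altB_eq_wordProd cs b k).symm
        have hμlen : (if b then altW i j k else altW j i k).length = k := by
          cases b <;> simp [altW_length]
        have hΩ : cs.wordProd (ωx ++ (if b then altW i j k else altW j i k))
            = x * altB cs i j b k := by
          rw [wordProd_append, ← hωprod, hμprod]
        obtain ⟨r, hr, hr2⟩ := exchange cs hdesc hΩ
        rw [List.length_append, hμlen] at hr
        rcases Nat.lt_or_ge r ωx.length with hcase | hcase
        · rw [List.eraseIdx_append_of_lt_length hcase, wordProd_append, hμprod] at hr2
          have hz : cs.wordProd (ωx.eraseIdx r) =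
              x * (altB cs i j b k * cs.simple (nxt i j b k) * (altB cs i j b k)⁻¹) := by
            have h5 := congrArg (fun z => z * (altB cs i j b k)⁻¹) hr2
            simp only [mul_assoc] at h5 ⊢
            have h6 : altB cs i j b k * (altB cs i j b k)⁻¹ = 1 := by simp
            rw [h6, mul_one] at h5
            exact h5.symm
          have hmem : altB cs i j b k * cs.simple (nxt i j b k) * (altB cs i j b k)⁻¹
              ∈ Subgroup.closure {cs.simple i, cs.simple j} :=
            mul_mem (mul_mem (altB_mem_closure cs b k)
              (simple_mem_closure cs (nxt_mem (i := i) (j := j) b k))) (inv_mem (altB_mem_closure cs b k))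
          have h1 : cs.length x ≤ cs.length (cs.wordProd (ωx.eraseIdx r)) := by
            rw [hz]; exact hmin _ hmem
          have h2 : cs.length (cs.wordProd (ωx.eraseIdx r)) ≤ (ωx.eraseIdx r).length :=
            cs.length_wordProd_le _
          have h3 := List.length_eraseIdx_add_one hcase
          have hωlen2 : cs.length x = ωx.length := by rw [hωprod]; exact hωlen
          omega
        · rw [List.eraseIdx_append_of_length_le hcase, wordProd_append, ← hωprod] at hr2
          have h4 : altB cs i j b (k + 1) =
              cs.wordProd ((if b then altW i j k else altW j i k).eraseIdx (r - ωx.length)) := by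
            rw [altB_succ]
            apply mul_left_cancel (a := x)
            rw [← mul_assoc]
            exact hr2
          have hrr : r - ωx.length < (if b then altW i j k else altW j i k).length := by
            rw [hμlen]; omega
          have hlen' := List.length_eraseIdx_add_one hrr
          obtain ⟨b', l, hlm, hlen2, hπδ⟩ := wordProd_eq_altB cs hm hm0 _
            (fun d hd => ifaltW_mem b k d ((List.eraseIdx_sublist _ _).mem hd))
          rw [hπδ] at h4
          have hcore := alt_core cs hm hm0 b b' (by omega) hlm h4
          rw [hμlen] at hlen'
          omega

/-- Every middle element of a string has exactly one descent among `i`, `j`. -/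
theorem xor_descent (x : W)
    (hmin : ∀ u ∈ Subgroup.closure {cs.simple i, cs.simple j},
      cs.length x ≤ cs.length (x * u))
    (b : Bool) (k : ℕ) (hk1 : 1 ≤ k) (hk2 : k ≤ m - 1) :
    Xor' (cs.IsRightDescent (x * altB cs i j b k) i)
      (cs.IsRightDescent (x * altB cs i j b k) j) := by
  have hm0 : 0 < m := by omega
  have hL := length_mul_altB cs hm hm0 x hmin b
  obtain ⟨l, rfl⟩ : ∃ l, k = l + 1 := ⟨k - 1, by omega⟩
  have e2 : x * altB cs i j b (l + 1) * cs.simple (nxt i j b l) = x * altB cs i j b l := by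
    rw [altB_succ, ← mul_assoc, cs.simple_mul_simple_cancel_right]
  have e1 : x * altB cs i j b (l + 1) * cs.simple (nxt i j b (l + 1))
      = x * altB cs i j b (l + 1 + 1) := by
    rw [altB_succ (cs := cs) b (l + 1), mul_assoc]
  have hdesc : cs.IsRightDescent (x * altB cs i j b (l + 1)) (nxt i j b l) := by
    show cs.length (x * altB cs i j b (l + 1) * cs.simple (nxt i j b l))
        < cs.length (x * altB cs i j b (l + 1))
    rw [e2, hL (l + 1) (by omega), hL l (by omega)]
    omega
  have hnodesc : ¬ cs.IsRightDescent (x * altB cs i j b (l + 1)) (nxt i j b (l + 1)) := by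
    show ¬ cs.length (x * altB cs i j b (l + 1) * cs.simple (nxt i j b (l + 1)))
        < cs.length (x * altB cs i j b (l + 1))
    rw [e1, hL (l + 1 + 1) (by omega), hL (l + 1) (by omega)]
    omega
  have hflip : nxt i j (!b) (l + 1) = nxt i j b l := nxt_flip (i := i) (j := j) b l
  rcases nxt_pair (i := i) (j := j) b (l + 1) with ⟨h1, h2⟩ | ⟨h1, h2⟩
  · rw [hflip] at h2
    rw [h2] at hdesc
    rw [h1] at hnodesc
    exact Or.inr ⟨hdesc, hnodesc⟩
  · rw [hflip] at h2
    rw [h2] at hdesc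
    rw [h1] at hnodesc
    exact Or.inl ⟨hdesc, hnodesc⟩

/-- The top element of the coset has both `i` and `j` as descents. -/
theorem top_both_descents (hm0 : 0 < m) (x : W)
    (hmin : ∀ u ∈ Subgroup.closure {cs.simple i, cs.simple j},
      cs.length x ≤ cs.length (x * u))
    (b : Bool) :
    cs.IsRightDescent (x * altB cs i j b m) i ∧
      cs.IsRightDescent (x * altB cs i j b m) j := by
  have hL := length_mul_altB cs hm hm0 x hmin
  have key : ∀ b' : Bool, cs.IsRightDescent (x * altB cs i j b' m) (nxt i j b' (m - 1)) := by
    intro b'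
    have hsplit : altB cs i j b' m =
        altB cs i j b' (m - 1) * cs.simple (nxt i j b' (m - 1)) := by
      have h3 := altB_succ (cs := cs) (i := i) (j := j) b' (m - 1)
      rw [show m - 1 + 1 = m from by omega] at h3
      exact h3
    have e2 : x * altB cs i j b' m * cs.simple (nxt i j b' (m - 1))
        = x * altB cs i j b' (m - 1) := by
      conv_lhs => rw [hsplit]
      rw [← mul_assoc, cs.simple_mul_simple_cancel_right]
    show cs.length (x * altB cs i j b' m * cs.simple (nxt i j b' (m - 1)))
        < cs.length (x * altB cs i j b' m)
    rw [e2, hL b' m le_rfl, hL b' (m - 1) (by omega)]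
    omega
  have k1 := key b
  have k2 := key (!b)
  rw [← altB_top_eq cs hm hm0 b] at k2
  rcases nxt_pair (i := i) (j := j) b (m - 1) with ⟨h1, h2⟩ | ⟨h1, h2⟩
  · rw [h1] at k1
    rw [h2] at k2
    exact ⟨k1, k2⟩
  · rw [h1] at k1
    rw [h2] at k2
    exact ⟨k2, k1⟩

end main

end StmtAux


/-- Let `s = s_i`, `t = s_j` with `st` of finite order `m ≥ 3`.  Every `w ∈ D_R(s,t)`
is, in a unique way, the `k`-th element (`1 ≤ k ≤ m-1`) of one of the two strings of
the coset `w⟨s,t⟩` (`x` being the minimal-length element of this coset); the map `w ↦ w̃`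
sending the `k`-th element of its string to the `(m-k)`-th element of the same string is
hence well defined, takes values in `D_R(s,t)`, and is an involution. -/
theorem stmt6 {B W : Type*} [Group W] {M : CoxeterMatrix B} (cs : CoxeterSystem M W)
    (i j : B) (hij : i ≠ j) (m : ℕ) (hm3 : 3 ≤ m)
    (hm : orderOf (cs.simple i * cs.simple j) = m) :
    ∀ w ∈ {w : W | Xor' (cs.IsRightDescent w i) (cs.IsRightDescent w j)},
      ∀ x : W,
        ((∃ u ∈ Subgroup.closure {cs.simple i, cs.simple j}, x = w * u) ∧
          ∀ y : W, (∃ u ∈ Subgroup.closure {cs.simple i, cs.simple j}, y = w * u) →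
            cs.length x ≤ cs.length y) →
        (∃! q : Bool × ℕ, (1 ≤ q.2 ∧ q.2 ≤ m - 1) ∧
            w = x * (if q.1 then altP cs i j q.2 else altP cs j i q.2)) ∧
        ∀ (b : Bool) (k : ℕ), 1 ≤ k → k ≤ m - 1 →
          w = x * (if b then altP cs i j k else altP cs j i k) →
          (x * (if b then altP cs i j (m - k) else altP cs j i (m - k)) ∈
            {w : W | Xor' (cs.IsRightDescent w i) (cs.IsRightDescent w j)}) ∧
          x * (if b then altP cs i j (m - (m - k)) else altP cs j i (m - (m - k)))
            = w := by
  intro w hw x hx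
  obtain ⟨⟨u₀, hu₀, hxwu⟩, hxmin⟩ := hx
  have hm0 : 0 < m := by omega
  have hw' : Xor' (cs.IsRightDescent w i) (cs.IsRightDescent w j) := hw
  have hAB : ∀ (b : Bool) (k : ℕ),
      (if b then altP cs i j k else altP cs j i k) = StmtAux.altB cs i j b k :=
    fun b k => rfl
  have hmin : ∀ u ∈ Subgroup.closure {cs.simple i, cs.simple j},
      cs.length x ≤ cs.length (x * u) := by
    intro u hu
    exact hxmin (x * u) ⟨u₀ * u, mul_mem hu₀ hu, by rw [hxwu, mul_assoc]⟩
  have hwx : w = x * u₀⁻¹ := by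
    rw [hxwu, mul_assoc, mul_inv_cancel, mul_one]
  obtain ⟨δ, hδmem, hδprod⟩ := StmtAux.exists_word_of_mem_closure cs (inv_mem hu₀)
  obtain ⟨b₀, l₀, hl₀m, -, hπδ⟩ := StmtAux.wordProd_eq_altB cs hm hm0 δ hδmem
  have hwl : w = x * StmtAux.altB cs i j b₀ l₀ := by rw [hwx, hδprod, hπδ]
  have ndx : ∀ c : B, (c = i ∨ c = j) → ¬ cs.IsRightDescent x c := by
    intro c hc hd
    have h1 := hmin (cs.simple c) (StmtAux.simple_mem_closure cs hc)
    have h2 : cs.length (x * cs.simple c) < cs.length x := hd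
    omega
  have hl₀0 : l₀ ≠ 0 := by
    rintro rfl
    rw [StmtAux.altB_zero, mul_one] at hwl
    rw [hwl] at hw'
    rcases hw' with ⟨h, -⟩ | ⟨h, -⟩
    · exact ndx i (Or.inl rfl) h
    · exact ndx j (Or.inr rfl) h
  have hl₀m' : l₀ ≠ m := by
    rintro rfl
    have hboth := StmtAux.top_both_descents cs hm hm0 x hmin b₀
    rw [← hwl] at hboth
    rcases hw' with ⟨-, hnd⟩ | ⟨-, hnd⟩
    · exact hnd hboth.2
    · exact hnd hboth.1
  constructor
  · refine ⟨(b₀, l₀), ⟨⟨by omega, by omega⟩, by rw [hAB]; exact hwl⟩, ?_⟩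
    rintro ⟨b', l'⟩ ⟨⟨hl'1, hl'2⟩, hw2⟩
    rw [hAB] at hw2
    have heq : StmtAux.altB cs i j b' l' = StmtAux.altB cs i j b₀ l₀ :=
      mul_left_cancel (by rw [← hw2, ← hwl])
    have hcore := StmtAux.alt_core cs hm hm0 b' b₀ (by omega) hl₀m heq
    have hb : b' = b₀ := by
      rcases hcore.2 with h | h | h
      · exact h
      · omega
      · omega
    rw [Prod.mk.injEq]
    exact ⟨hb, by omega⟩
  · intro b k hk1 hk2 hwk
    rw [hAB] at hwk
    constructor
    · rw [hAB]
      show Xor' _ _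
      exact StmtAux.xor_descent cs hm x hmin b (m - k) (by omega) (by omega)
    · rw [hAB, show m - (m - k) = k from by omega]
      exact hwk.symm
end

section
/- Let (W,S) be a Coxeter system with Hecke algebra H over A = ℤ[Γ] with positive weight function p, and Kazhdan–Lusztig left preorder ≤_L. If x ≤_L y, then the right descent set of y is contained in the right descent set of x: R(y) ⊆ R(x). Consequently, if x ∼_L y then R(x) = R(y), and for each I ⊆ S the set {w ∈ W | R(w) = I} is a union of left cells. -/
open CoxeterSystem

/-- `vv a` is the basis element `v^a` of `A = ℤ[Γ]`. -/
noncomputable def vv {Γ : Type*} [AddCommGroup Γ] [LinearOrder Γ] [IsOrderedAddMonoid Γ] (a : Γ) :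
    AddMonoidAlgebra ℤ Γ := AddMonoidAlgebra.single a 1

/-- The bar involution on `A = ℤ[Γ]`, determined by `v^a ↦ v^{-a}`. -/
noncomputable def barA (Γ : Type*) [AddCommGroup Γ] [LinearOrder Γ] [IsOrderedAddMonoid Γ] :
    AddMonoidAlgebra ℤ Γ ≃ₐ[ℤ] AddMonoidAlgebra ℤ Γ :=
  AddMonoidAlgebra.domCongr ℤ ℤ (AddEquiv.neg Γ)

/-- The generic Iwahori–Hecke algebra `H` of the Coxeter system `cs` over `A = ℤ[Γ]`
with (positive) weight function `p`, together with its Kazhdan–Lusztig basis `C`: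
`T` is the standard basis (with `T_1 = 1` and the usual multiplication rule),
`bar` is the bar involution (the semilinear ring involution with `bar T_s = T_s⁻¹`),
and `C` is the unique basis with `bar (C_w) = C_w` and
`C_w ∈ T_w + Σ_y A_{<0} T_y` (Kazhdan--Lusztig, Lusztig). -/
structure KLHecke {B W : Type*} [Group W] {M : CoxeterMatrix B}
    (cs : CoxeterSystem M W) (Γ : Type*) [AddCommGroup Γ] [LinearOrder Γ] [IsOrderedAddMonoid Γ]
    (p : B → Γ) (H : Type*) [Ring H] [Algebra (AddMonoidAlgebra ℤ Γ) H] where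
  pos : ∀ i, 0 < p i
  conj : ∀ i j, IsConj (cs.simple i) (cs.simple j) → p i = p j
  T : Module.Basis W (AddMonoidAlgebra ℤ Γ) H
  T_one : T 1 = 1
  T_mul : ∀ (i : B) (w : W), T (cs.simple i) * T w =
    if cs.length w < cs.length (cs.simple i * w) then T (cs.simple i * w)
    else T (cs.simple i * w) + (vv (p i) - vv (-p i)) • T w
  bar : H →+* H
  bar_smul : ∀ (a : AddMonoidAlgebra ℤ Γ) (x : H),
    bar (a • x) = (barA Γ a) • bar x
  bar_T : ∀ i : B, bar (T (cs.simple i)) =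
    T (cs.simple i) + (vv (-p i) - vv (p i)) • 1
  C : Module.Basis W (AddMonoidAlgebra ℤ Γ) H
  bar_C : ∀ w, bar (C w) = C w
  C_diag : ∀ w, T.repr (C w) w = 1
  C_lt : ∀ w y, y ≠ w → ∀ γ ∈ (T.repr (C w) y).coeff.support, γ < 0

namespace KLHecke

variable {B W : Type*} [Group W] {M : CoxeterMatrix B}
    {cs : CoxeterSystem M W} {Γ : Type*} [AddCommGroup Γ] [LinearOrder Γ] [IsOrderedAddMonoid Γ]
    {p : B → Γ} {H : Type*} [Ring H] [Algebra (AddMonoidAlgebra ℤ Γ) H]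

/-- `x ←_L y` : `C'_x` occurs in `C'_s C'_y` for some `s ∈ S`. -/
def leftStep (d : KLHecke cs Γ p H) (x y : W) : Prop :=
  ∃ i : B, d.C.repr (d.C (cs.simple i) * d.C y) x ≠ 0

/-- The Kazhdan–Lusztig left preorder `x ≤_L y` (reflexive-transitive closure of
`←_L`). -/
def LeftLe (d : KLHecke cs Γ p H) : W → W → Prop :=
  Relation.ReflTransGen d.leftStep

/-- `x ←_R y` : `C'_x` occurs in `C'_y C'_s` for some `s ∈ S`. -/
def rightStep (d : KLHecke cs Γ p H) (x y : W) : Prop :=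
  ∃ i : B, d.C.repr (d.C y * d.C (cs.simple i)) x ≠ 0

/-- The Kazhdan–Lusztig right preorder `x ≤_R y`. -/
def RightLe (d : KLHecke cs Γ p H) : W → W → Prop :=
  Relation.ReflTransGen d.rightStep

/-- The left cell equivalence `x ∼_L y`. -/
def LeftEquiv (d : KLHecke cs Γ p H) (x y : W) : Prop :=
  d.LeftLe x y ∧ d.LeftLe y x

end KLHecke

namespace KLHecke

open CoxeterSystem

variable {B W : Type*} [Group W] {M : CoxeterMatrix B}
    {cs : CoxeterSystem M W} {Γ : Type*} [AddCommGroup Γ] [LinearOrder Γ] [IsOrderedAddMonoid Γ]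
    {p : B → Γ} {H : Type*} [Ring H] [Algebra (AddMonoidAlgebra ℤ Γ) H]

lemma vv_mul_vv (a b : Γ) : (vv a * vv b : AddMonoidAlgebra ℤ Γ) = vv (a + b) := by
  simp [vv, AddMonoidAlgebra.single_mul_single]

lemma vv_zero : (vv (0 : Γ) : AddMonoidAlgebra ℤ Γ) = 1 := rfl

lemma simple_mul_eq_iff (i : B) (u z : W) :
    cs.simple i * u = z ↔ u = cs.simple i * z := by
  constructor
  · rintro rfl; rw [← mul_assoc, cs.simple_mul_simple_self, one_mul]
  · rintro rfl; rw [← mul_assoc, cs.simple_mul_simple_self, one_mul]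

variable (d : KLHecke cs Γ p H)

/-- The right-handed multiplication rule for the standard basis. -/
lemma T_mul_simple (w : W) (i : B) :
    d.T w * d.T (cs.simple i) =
      if cs.length w < cs.length (w * cs.simple i) then d.T (w * cs.simple i)
      else d.T (w * cs.simple i) + (vv (p i) - vv (-p i)) • d.T w := by
  suffices key : ∀ n (w : W) (i : B), cs.length w = n →
      d.T w * d.T (cs.simple i) =
        if cs.length w < cs.length (w * cs.simple i) then d.T (w * cs.simple i)
        else d.T (w * cs.simple i) + (vv (p i) - vv (-p i)) • d.T w by
    exact key _ w i rfl
  intro n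
  induction n using Nat.strong_induction_on with
  | _ n IH =>
  intro w i hn
  rcases eq_or_ne w 1 with rfl | hw1
  · rw [if_pos (by simp [cs.length_simple]), d.T_one, one_mul, one_mul]
  · by_cases hd : cs.IsRightDescent w i
    · -- descent case: pick a reduced word for w ending in i
      have hlw : cs.length (w * cs.simple i) + 1 = cs.length w := cs.isRightDescent_iff.mp hd
      rw [if_neg (by omega)]
      obtain ⟨ω', hlen', hw'⟩ := cs.exists_reduced_word (w * cs.simple i)
      have hων : cs.wordProd (ω' ++ [i]) = w := by
        rw [cs.wordProd_append, ← hw', cs.wordProd_singleton, mul_assoc,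
          cs.simple_mul_simple_self, mul_one]
      rcases ω' with _ | ⟨j, σ⟩
      · -- w = s i
        have hwi : w = cs.simple i := by simpa using hων.symm
        subst hwi
        rw [d.T_mul i (cs.simple i), if_neg (by
          rw [cs.simple_mul_simple_self, cs.length_one]; omega)]
      · have hℓw : cs.length w = σ.length + 2 := by
          rw [← hlw, hw', (hlen' : cs.length (cs.wordProd (j :: σ)) = (j :: σ).length)]; simp
        set u := cs.wordProd (σ ++ [i]) with hu
        have hwu : w = cs.simple j * u := by
          rw [← hων, List.cons_append, cs.wordProd_cons]
        have hu_le : cs.length u ≤ σ.length + 1 := by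
          simpa using cs.length_wordProd_le (σ ++ [i])
        have hu_ge : cs.length w ≤ 1 + cs.length u := by
          calc cs.length w = cs.length (cs.simple j * u) := by rw [← hwu]
            _ ≤ cs.length (cs.simple j) + cs.length u := cs.length_mul_le _ _
            _ = 1 + cs.length u := by rw [cs.length_simple]
        have hℓu : cs.length u = σ.length + 1 := by omega
        have husi : u * cs.simple i = cs.wordProd σ := by
          rw [hu, cs.wordProd_append, cs.wordProd_singleton, mul_assoc,
            cs.simple_mul_simple_self, mul_one]
        have husi_len : cs.length (u * cs.simple i) ≤ σ.length := by
          rw [husi]; exact cs.length_wordProd_le σ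
        have ihu : d.T u * d.T (cs.simple i)
            = d.T (u * cs.simple i) + (vv (p i) - vv (-p i)) • d.T u := by
          rw [IH (σ.length + 1) (by omega) u i hℓu, if_neg (by omega)]
        have Tw : d.T (cs.simple j) * d.T u = d.T w := by
          rw [d.T_mul j u, if_pos (by rw [← hwu]; omega), ← hwu]
        have Tsju : d.T (cs.simple j) * d.T (u * cs.simple i) = d.T (w * cs.simple i) := by
          have e : cs.simple j * (u * cs.simple i) = w * cs.simple i := by
            rw [hwu, mul_assoc]
          rw [d.T_mul j (u * cs.simple i), e, if_pos (by omega)]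
        calc d.T w * d.T (cs.simple i)
            = d.T (cs.simple j) * (d.T u * d.T (cs.simple i)) := by rw [← Tw, mul_assoc]
          _ = d.T (cs.simple j) * d.T (u * cs.simple i)
              + (vv (p i) - vv (-p i)) • (d.T (cs.simple j) * d.T u) := by
              rw [ihu, mul_add, mul_smul_comm]
          _ = d.T (w * cs.simple i) + (vv (p i) - vv (-p i)) • d.T w := by
              rw [Tw, Tsju]
    · -- non-descent case
      have hlw : cs.length (w * cs.simple i) = cs.length w + 1 := cs.not_isRightDescent_iff.mp hd
      rw [if_pos (by omega)]
      obtain ⟨j, hj⟩ := cs.exists_leftDescent_of_ne_one hw1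
      set u := cs.simple j * w with hu
      have hwu : w = cs.simple j * u := by
        rw [hu, ← mul_assoc, cs.simple_mul_simple_self, one_mul]
      have hℓu : cs.length u + 1 = cs.length w := cs.isLeftDescent_iff.mp hj
      have Tw : d.T (cs.simple j) * d.T u = d.T w := by
        rw [d.T_mul j u, if_pos (by rw [← hwu]; omega), ← hwu]
      rcases cs.length_mul_simple u i with husi | husi
      · -- length goes up: the good case
        have ihu : d.T u * d.T (cs.simple i) = d.T (u * cs.simple i) := by
          rw [IH (cs.length u) (by omega) u i rfl, if_pos (by omega)]
        have Tsju : d.T (cs.simple j) * d.T (u * cs.simple i) = d.T (w * cs.simple i) := by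
          have e : cs.simple j * (u * cs.simple i) = w * cs.simple i := by
            rw [hu, ← mul_assoc, ← mul_assoc, cs.simple_mul_simple_self, one_mul]
          rw [d.T_mul j (u * cs.simple i), e, if_pos (by omega)]
        rw [← Tw, mul_assoc, ihu, Tsju]
      · -- length goes down: impossible
        exfalso
        have : cs.length (w * cs.simple i) ≤ cs.length (cs.simple j) + cs.length (u * cs.simple i) := by
          rw [hwu, mul_assoc]; exact cs.length_mul_le _ _
        rw [cs.length_simple] at this
        omega

end KLHecke

namespace KLHecke

open CoxeterSystem

variable {B W : Type*} [Group W] {M : CoxeterMatrix B}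
    {cs : CoxeterSystem M W} {Γ : Type*} [AddCommGroup Γ] [LinearOrder Γ] [IsOrderedAddMonoid Γ]
    {p : B → Γ} {H : Type*} [Ring H] [Algebra (AddMonoidAlgebra ℤ Γ) H]

lemma mul_simple_eq_iff (i : B) (u z : W) :
    u * cs.simple i = z ↔ u = z * cs.simple i := by
  constructor
  · rintro rfl; rw [mul_assoc, cs.simple_mul_simple_self, mul_one]
  · rintro rfl; rw [mul_assoc, cs.simple_mul_simple_self, mul_one]

variable (d : KLHecke cs Γ p H)

/-- Coefficients of a right multiplication by `T_s`. -/
lemma repr_mul_simple (i : B) (h : H) (z : W) :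
    d.T.repr (h * d.T (cs.simple i)) z =
      d.T.repr h (z * cs.simple i) +
      (if cs.length (z * cs.simple i) < cs.length z then
        (vv (p i) - vv (-p i)) else 0) * d.T.repr h z := by
  classical
  have hmaps : (Finsupp.lapply z ∘ₗ d.T.repr.toLinearMap
        ∘ₗ LinearMap.mulRight (AddMonoidAlgebra ℤ Γ) (d.T (cs.simple i)))
      = (Finsupp.lapply (z * cs.simple i) ∘ₗ d.T.repr.toLinearMap)
        + (if cs.length (z * cs.simple i) < cs.length z then
            (vv (p i) - vv (-p i)) else 0) • (Finsupp.lapply z ∘ₗ d.T.repr.toLinearMap) := by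
    apply d.T.ext
    intro u
    simp only [LinearMap.comp_apply, LinearMap.add_apply, LinearMap.smul_apply,
      LinearMap.mulRight_apply, Finsupp.lapply_apply, LinearEquiv.coe_coe]
    rw [d.T_mul_simple u i]
    by_cases hlu : cs.length u < cs.length (u * cs.simple i)
    · rw [if_pos hlu]
      simp only [Module.Basis.repr_self, Finsupp.single_apply, mul_simple_eq_iff, smul_eq_mul]
      have h2 : (if cs.length (z * cs.simple i) < cs.length z then
          (vv (p i) - vv (-p i)) else 0) * (if u = z then (1 : AddMonoidAlgebra ℤ Γ) else 0)
          = 0 := by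
        by_cases huz : u = z
        · subst huz
          have hc : ¬ cs.length (u * cs.simple i) < cs.length u := by omega
          rw [if_neg hc, zero_mul]
        · simp [huz]
      rw [h2, add_zero]
    · rw [if_neg hlu]
      have hlu' : cs.length (u * cs.simple i) + 1 = cs.length u :=
        (cs.length_mul_simple u i).resolve_left (by omega)
      simp only [map_add, map_smul, Module.Basis.repr_self, Finsupp.add_apply, Finsupp.smul_apply,
        Finsupp.single_apply, mul_simple_eq_iff, smul_eq_mul]
      congr 1
      by_cases huz : u = z
      · subst huz
        have hc : cs.length (u * cs.simple i) < cs.length u := by omega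
        rw [if_pos hc]
      · simp [huz]
  have := LinearMap.congr_fun hmaps h
  simp only [LinearMap.comp_apply, LinearMap.add_apply, LinearMap.smul_apply,
    LinearMap.mulRight_apply, Finsupp.lapply_apply, LinearEquiv.coe_coe, smul_eq_mul] at this
  exact this

/-- Coefficients of a left multiplication by `T_s`. -/
lemma repr_simple_mul (i : B) (h : H) (z : W) :
    d.T.repr (d.T (cs.simple i) * h) z =
      d.T.repr h (cs.simple i * z) +
      (if cs.length (cs.simple i * z) < cs.length z then
        (vv (p i) - vv (-p i)) else 0) * d.T.repr h z := by
  classical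
  have hmaps : (Finsupp.lapply z ∘ₗ d.T.repr.toLinearMap
        ∘ₗ LinearMap.mulLeft (AddMonoidAlgebra ℤ Γ) (d.T (cs.simple i)))
      = (Finsupp.lapply (cs.simple i * z) ∘ₗ d.T.repr.toLinearMap)
        + (if cs.length (cs.simple i * z) < cs.length z then
            (vv (p i) - vv (-p i)) else 0) • (Finsupp.lapply z ∘ₗ d.T.repr.toLinearMap) := by
    apply d.T.ext
    intro u
    simp only [LinearMap.comp_apply, LinearMap.add_apply, LinearMap.smul_apply,
      LinearMap.mulLeft_apply, Finsupp.lapply_apply, LinearEquiv.coe_coe]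
    rw [d.T_mul i u]
    by_cases hlu : cs.length u < cs.length (cs.simple i * u)
    · rw [if_pos hlu]
      simp only [Module.Basis.repr_self, Finsupp.single_apply, simple_mul_eq_iff, smul_eq_mul]
      have h2 : (if cs.length (cs.simple i * z) < cs.length z then
          (vv (p i) - vv (-p i)) else 0) * (if u = z then (1 : AddMonoidAlgebra ℤ Γ) else 0)
          = 0 := by
        by_cases huz : u = z
        · subst huz
          have hc : ¬ cs.length (cs.simple i * u) < cs.length u := by omega
          rw [if_neg hc, zero_mul]
        · simp [huz]
      rw [h2, add_zero]
    · rw [if_neg hlu]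
      have hlu' : cs.length (cs.simple i * u) + 1 = cs.length u :=
        (cs.length_simple_mul u i).resolve_left (by omega)
      simp only [map_add, map_smul, Module.Basis.repr_self, Finsupp.add_apply, Finsupp.smul_apply,
        Finsupp.single_apply, simple_mul_eq_iff, smul_eq_mul]
      congr 1
      by_cases huz : u = z
      · subst huz
        have hc : cs.length (cs.simple i * u) < cs.length u := by omega
        rw [if_pos hc]
      · simp [huz]
  have := LinearMap.congr_fun hmaps h
  simp only [LinearMap.comp_apply, LinearMap.add_apply, LinearMap.smul_apply,
    LinearMap.mulLeft_apply, Finsupp.lapply_apply, LinearEquiv.coe_coe, smul_eq_mul] at this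
  exact this

/-- Triangularity of the bar involution on the standard basis. -/
lemma repr_bar_T (w : W) :
    (∀ z : W, cs.length w ≤ cs.length z → z ≠ w → d.T.repr (d.bar (d.T w)) z = 0)
    ∧ d.T.repr (d.bar (d.T w)) w = 1 := by
  classical
  suffices key : ∀ n (w : W), cs.length w = n →
      (∀ z : W, cs.length w ≤ cs.length z → z ≠ w → d.T.repr (d.bar (d.T w)) z = 0)
      ∧ d.T.repr (d.bar (d.T w)) w = 1 by
    exact key _ w rfl
  intro n
  induction n using Nat.strong_induction_on with
  | _ n IH =>
  intro w hn
  rcases eq_or_ne w 1 with rfl | hw1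
  · rw [d.T_one, map_one, ← d.T_one, Module.Basis.repr_self]
    constructor
    · intro z _ hz1
      rw [Finsupp.single_apply, if_neg (fun h => hz1 h.symm)]
    · simp
  · obtain ⟨j, hj⟩ := cs.exists_leftDescent_of_ne_one hw1
    set u := cs.simple j * w with hu
    have hwu : w = cs.simple j * u := by
      rw [hu, ← mul_assoc, cs.simple_mul_simple_self, one_mul]
    have hℓu : cs.length u + 1 = cs.length w := cs.isLeftDescent_iff.mp hj
    have Tw : d.T (cs.simple j) * d.T u = d.T w := by
      rw [d.T_mul j u, if_pos (by rw [← hwu]; omega), ← hwu]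
    have hbar : d.bar (d.T w) = d.T (cs.simple j) * d.bar (d.T u)
        + (vv (-p j) - vv (p j)) • d.bar (d.T u) := by
      rw [← Tw, map_mul, d.bar_T j, add_mul, smul_mul_assoc, one_mul]
    have IHu := IH (cs.length u) (by omega) u rfl
    constructor
    · intro z hz hzw
      have hsz : cs.length u ≤ cs.length (cs.simple j * z) := by
        rcases cs.length_simple_mul z j with h' | h' <;> omega
      have ih1 : d.T.repr (d.bar (d.T u)) (cs.simple j * z) = 0 := by
        refine IHu.1 _ hsz (fun hc => hzw ?_)
        rw [hwu, ← hc, ← mul_assoc, cs.simple_mul_simple_self, one_mul]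
      have ih2 : d.T.repr (d.bar (d.T u)) z = 0 := by
        refine IHu.1 z (by omega) (fun hc => ?_)
        rw [hc] at hz; omega
      rw [hbar, map_add, Finsupp.add_apply, map_smul, Finsupp.smul_apply,
        d.repr_simple_mul j _ z, ih1, ih2, smul_eq_mul, mul_zero, mul_zero,
        add_zero, zero_add]
    · have ih1 : d.T.repr (d.bar (d.T u)) (cs.simple j * w) = 1 := by
        rw [← hu]; exact IHu.2
      have ih2 : d.T.repr (d.bar (d.T u)) w = 0 := by
        refine IHu.1 w (by omega) (fun hc => ?_)
        rw [hc] at hℓu; omega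
      rw [hbar, map_add, Finsupp.add_apply, map_smul, Finsupp.smul_apply,
        d.repr_simple_mul j _ w, ih1, ih2, smul_eq_mul, mul_zero, mul_zero,
        add_zero, add_zero]

end KLHecke

namespace KLHecke

open CoxeterSystem

variable {B W : Type*} [Group W] {M : CoxeterMatrix B}
    {cs : CoxeterSystem M W} {Γ : Type*} [AddCommGroup Γ] [LinearOrder Γ] [IsOrderedAddMonoid Γ]
    {p : B → Γ} {H : Type*} [Ring H] [Algebra (AddMonoidAlgebra ℤ Γ) H]

lemma barA_apply (a : AddMonoidAlgebra ℤ Γ) (γ : Γ) : (barA Γ a).coeff γ = a.coeff (-γ) := by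
  rw [barA, AddMonoidAlgebra.coeff_domCongr]
  rfl

lemma isUnit_vv (a : Γ) : IsUnit (vv a : AddMonoidAlgebra ℤ Γ) :=
  IsUnit.of_mul_eq_one (vv (-a)) (by rw [vv_mul_vv, add_neg_cancel, vv_zero])

/-- support of `vv (-c) * a` is negative if `supp a ≤ 0`. -/
lemma support_vv_neg_mul {c : Γ} (hc : 0 < c) {a : AddMonoidAlgebra ℤ Γ}
    (ha : ∀ γ ∈ a.coeff.support, γ ≤ 0) :
    ∀ γ ∈ (vv (-c) * a).coeff.support, γ < 0 := by
  classical
  intro γ hγ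
  have := AddMonoidAlgebra.support_coeff_mul_subset (vv (-c) : AddMonoidAlgebra ℤ Γ) a hγ
  rw [Finset.mem_add] at this
  obtain ⟨γ₁, h1, γ₂, h2, rfl⟩ := this
  have hγ1 : γ₁ = -c := by
    have := Finsupp.support_single_subset (show γ₁ ∈ (Finsupp.single (-c) (1:ℤ)).support from h1)
    simpa [vv] using this
  have := ha γ₂ h2
  rw [hγ1]
  exact add_neg_of_neg_of_nonpos (neg_lt_zero.mpr hc) this

variable (d : KLHecke cs Γ p H)

/-- All coefficients of `C_y` have support in `Γ≤0`. -/
lemma repr_C_le (y z : W) : ∀ γ ∈ (d.T.repr (d.C y) z).coeff.support, γ ≤ 0 := by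
  intro γ hγ
  rcases eq_or_ne z y with rfl | hzy
  · rw [d.C_diag z] at hγ
    rw [AddMonoidAlgebra.one_def, AddMonoidAlgebra.coeff_single] at hγ
    have := Finsupp.support_single_subset hγ
    simp only [Finset.mem_singleton] at this
    exact le_of_eq this
  · exact le_of_lt (d.C_lt y z hzy γ hγ)

/-- The coefficient of the bar of an element at a `length`-maximal spot. -/
lemma repr_bar_apply (x : H) (z₀ : W)
    (hmax : ∀ z ∈ (d.T.repr x).support, cs.length z ≤ cs.length z₀) :
    d.T.repr (d.bar x) z₀ = barA Γ (d.T.repr x z₀) := by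
  classical
  have hx : x = (d.T.repr x).sum fun z a => a • d.T z := by
    conv_lhs => rw [← d.T.linearCombination_repr x]
    rw [Finsupp.linearCombination_apply]
  have hbar : d.bar x = (d.T.repr x).sum fun z a => barA Γ a • d.bar (d.T z) := by
    conv_lhs => rw [hx]
    rw [map_finsuppSum]
    exact Finsupp.sum_congr (fun z _ => d.bar_smul _ _)
  rw [hbar, map_finsuppSum]
  have : ((d.T.repr x).sum fun z a => d.T.repr (barA Γ a • d.bar (d.T z)) z₀)
      = (d.T.repr x).sum fun z a => barA Γ a * d.T.repr (d.bar (d.T z)) z₀ := by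
    refine Finsupp.sum_congr (fun z _ => ?_)
    rw [map_smul]; rfl
  rw [Finsupp.sum_apply, this]
  rw [Finsupp.sum]
  rw [Finset.sum_eq_single z₀]
  · rw [(d.repr_bar_T z₀).2, mul_one]
  · intro z hz hzz0
    rw [(d.repr_bar_T z).1 z₀ (hmax z hz) (Ne.symm hzz0), mul_zero]
  · intro hz0
    rw [Finsupp.notMem_support_iff.mp hz0, map_zero, zero_mul]

end KLHecke

namespace KLHecke

open CoxeterSystem

variable {B W : Type*} [Group W] {M : CoxeterMatrix B}
    {cs : CoxeterSystem M W} {Γ : Type*} [AddCommGroup Γ] [LinearOrder Γ] [IsOrderedAddMonoid Γ]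
    {p : B → Γ} {H : Type*} [Ring H] [Algebra (AddMonoidAlgebra ℤ Γ) H]
    (d : KLHecke cs Γ p H)

lemma barA_vv (a : Γ) : barA Γ (vv a : AddMonoidAlgebra ℤ Γ) = vv (-a) := by
  rw [vv, vv, barA, AddMonoidAlgebra.domCongr_single]
  rfl

/-- If `s` is a right descent of `y`, then `C_y` is a `v^{p s}`-eigenvector for
right multiplication by `T_s`. -/
lemma C_mul_T_simple {y : W} {i : B} (hd : cs.IsRightDescent y i) :
    d.C y * d.T (cs.simple i) = vv (p i) • d.C y := by
  classical
  set Dh := d.C y * d.T (cs.simple i) - vv (p i) • d.C y with hDh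
  suffices hD0 : Dh = 0 by
    have := sub_eq_zero.mp hD0
    exact this
  -- bar invariance of Dh
  have hbar : d.bar Dh = Dh := by
    rw [hDh, map_sub, map_mul, d.bar_C, d.bar_T i, d.bar_smul, d.bar_C, barA_vv,
      mul_add, mul_smul_comm, mul_one, sub_smul]
    abel
  have hvv : (vv (-p i) * vv (p i) : AddMonoidAlgebra ℤ Γ) = 1 := by
    rw [vv_mul_vv, neg_add_cancel, vv_zero]
  -- coefficient formula
  have hcoef : ∀ z : W, d.T.repr Dh z = d.T.repr (d.C y) (z * cs.simple i)
      + (if cs.length (z * cs.simple i) < cs.length z then (vv (p i) - vv (-p i)) else 0)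
          * d.T.repr (d.C y) z
      - vv (p i) * d.T.repr (d.C y) z := by
    intro z
    rw [hDh, map_sub, Finsupp.sub_apply, d.repr_mul_simple i _ z, map_smul,
      Finsupp.smul_apply, smul_eq_mul]
  by_contra hD0
  have hne : (d.T.repr Dh).support.Nonempty := by
    rw [Finsupp.support_nonempty_iff]
    exact fun hc => hD0 ((LinearEquiv.map_eq_zero_iff _).mp hc)
  obtain ⟨z₀, hz₀mem, hz₀max⟩ := Finset.exists_max_image _ (fun z => cs.length z) hne
  have hcz₀ : d.T.repr Dh z₀ ≠ 0 := Finsupp.mem_support_iff.mp hz₀mem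
  by_cases hzd : cs.IsRightDescent z₀ i
  · -- descent at the maximum: negativity contradicts bar invariance
    have hdz : d.T.repr Dh z₀ = d.T.repr (d.C y) (z₀ * cs.simple i)
        - vv (-p i) * d.T.repr (d.C y) z₀ := by
      rw [hcoef z₀, if_pos (show cs.length (z₀ * cs.simple i) < cs.length z₀ from hzd)]
      ring
    have hneg : ∀ γ ∈ (d.T.repr Dh z₀).coeff.support, γ < 0 := by
      intro γ hγ
      rw [hdz, AddMonoidAlgebra.coeff_sub] at hγ
      rcases Finset.mem_union.mp (Finsupp.support_sub hγ) with h | h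
      · have hzsy : z₀ * cs.simple i ≠ y := by
          intro hc
          have h1 : cs.length (z₀ * cs.simple i) < cs.length z₀ := hzd
          have h2 : cs.length (y * cs.simple i) < cs.length y := hd
          rw [hc] at h1
          have e1 : z₀ = y * cs.simple i := by
            rw [← hc, mul_assoc, cs.simple_mul_simple_self, mul_one]
          rw [← e1] at h2
          omega
        exact d.C_lt y _ hzsy γ h
      · exact support_vv_neg_mul (d.pos i) (d.repr_C_le y z₀) γ h
    have hbarz : d.T.repr Dh z₀ = barA Γ (d.T.repr Dh z₀) := by
      conv_lhs => rw [← hbar]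
      exact d.repr_bar_apply Dh z₀ hz₀max
    obtain ⟨γ, hγ⟩ := Finsupp.support_nonempty_iff.mpr (mt AddMonoidAlgebra.coeff_eq_zero.mp hcz₀)
    have h1 : γ < 0 := hneg γ hγ
    have h2 : (-γ) ∈ (d.T.repr Dh z₀).coeff.support := by
      rw [Finsupp.mem_support_iff]
      rw [hbarz, barA_apply, neg_neg]
      exact Finsupp.mem_support_iff.mp hγ
    have := hneg _ h2
    have h3 : (0:Γ) < -γ := neg_pos.mpr h1
    exact absurd this (not_lt.mpr (le_of_lt h3))
  · -- no descent at the maximum: the coefficient at `z₀ * s` is also nonzero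
    have hlen : cs.length (z₀ * cs.simple i) = cs.length z₀ + 1 :=
      cs.not_isRightDescent_iff.mp hzd
    have e1 : z₀ * cs.simple i * cs.simple i = z₀ := by
      rw [mul_assoc, cs.simple_mul_simple_self, mul_one]
    have h2 : d.T.repr Dh (z₀ * cs.simple i) = (- vv (-p i)) * d.T.repr Dh z₀ := by
      rw [hcoef (z₀ * cs.simple i), hcoef z₀, e1,
        if_pos (show cs.length z₀ < cs.length (z₀ * cs.simple i) by omega),
        if_neg (show ¬ cs.length (z₀ * cs.simple i) < cs.length z₀ from hzd)]
      linear_combination (-(d.T.repr (d.C y) z₀)) * hvv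
    have h3 : d.T.repr Dh (z₀ * cs.simple i) ≠ 0 := by
      rw [h2]
      intro hc
      exact hcz₀ ((IsUnit.mul_right_eq_zero ((isUnit_vv (-p i)).neg)).mp hc)
    have := hz₀max _ (Finsupp.mem_support_iff.mpr h3)
    omega

end KLHecke

namespace KLHecke

open CoxeterSystem

variable {B W : Type*} [Group W] {M : CoxeterMatrix B}
    {cs : CoxeterSystem M W} {Γ : Type*} [AddCommGroup Γ] [LinearOrder Γ] [IsOrderedAddMonoid Γ]
    {p : B → Γ} {H : Type*} [Ring H] [Algebra (AddMonoidAlgebra ℤ Γ) H]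

lemma mul_coeff_zero {x y : AddMonoidAlgebra ℤ Γ} {β : Γ} (hx : ∀ γ ∈ x.coeff.support, γ ≤ β)
    (hy : ∀ γ ∈ y.coeff.support, γ < 0) : (x * y).coeff β = 0 := by
  classical
  by_contra hc
  obtain ⟨γ₁, h1, γ₂, h2, hβ⟩ := Finset.mem_add.mp
    (AddMonoidAlgebra.support_coeff_mul_subset x y (Finsupp.mem_support_iff.mpr hc))
  have : γ₁ + γ₂ < β + 0 := add_lt_add_of_le_of_lt (hx _ h1) (hy _ h2)
  rw [hβ, add_zero] at this
  exact lt_irrefl β this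

variable (d : KLHecke cs Γ p H)

/-- Any `v^{p i}`-eigenvector of right multiplication by `T_{s_i}` is supported,
in the KL basis, on elements having `i` as a right descent. -/
lemma isRightDescent_of_repr_ne_zero {i : B} {h : H}
    (hh : h * d.T (cs.simple i) = vv (p i) • h) :
    ∀ x : W, d.C.repr h x ≠ 0 → cs.IsRightDescent x i := by
  classical
  set b := d.C.repr h with hb
  set K := b.support.filter (fun z => ¬ cs.IsRightDescent z i) with hK
  suffices hKe : K = ∅ by
    intro x hx
    by_contra hnd
    have : x ∈ K := Finset.mem_filter.mpr ⟨Finsupp.mem_support_iff.mpr hx, hnd⟩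
    rw [hKe] at this
    exact absurd this (Finset.notMem_empty x)
  set g : H := ∑ z ∈ K, b z • d.C z with hg
  -- g is also an eigenvector
  have hsplit : (∑ z ∈ b.support.filter (fun z => cs.IsRightDescent z i), b z • d.C z) + g
      = h := by
    rw [hg, Finset.sum_filter_add_sum_filter_not]
    conv_rhs => rw [← d.C.linearCombination_repr h]
    rw [Finsupp.linearCombination_apply, Finsupp.sum]
  have hgdef : g = h - ∑ z ∈ b.support.filter (fun z => cs.IsRightDescent z i), b z • d.C z := by
    rw [← hsplit]; abel
  have hgT : g * d.T (cs.simple i) = vv (p i) • g := by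
    rw [hgdef, sub_mul, hh, Finset.sum_mul, smul_sub, Finset.smul_sum]
    congr 1
    refine Finset.sum_congr rfl (fun z hz => ?_)
    have hdz : cs.IsRightDescent z i := (Finset.mem_filter.mp hz).2
    rw [smul_mul_assoc, d.C_mul_T_simple hdz, smul_smul, smul_smul, mul_comm]
  -- coefficient formula for g in the standard basis
  have Tcoef : ∀ u : W, d.T.repr g u = ∑ z ∈ K, b z * d.T.repr (d.C z) u := by
    intro u
    rw [hg, map_sum, Finsupp.finset_sum_apply]
    exact Finset.sum_congr rfl (fun z _ => by
      rw [map_smul, Finsupp.smul_apply, smul_eq_mul])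
  -- suppose K is nonempty and derive a contradiction
  by_contra hKne
  have hKne' : K.Nonempty := Finset.nonempty_of_ne_empty hKne
  have hbne : ∀ z ∈ K, (b z).coeff.support.Nonempty := by
    intro z hz
    rw [Finsupp.support_nonempty_iff]
    exact mt AddMonoidAlgebra.coeff_eq_zero.mp (Finsupp.mem_support_iff.mp (Finset.mem_filter.mp hz).1)
  have hSne : (K.biUnion (fun z => (b z).coeff.support)).Nonempty := by
    obtain ⟨z, hz⟩ := hKne'
    obtain ⟨γ, hγ⟩ := hbne z hz
    exact ⟨γ, Finset.mem_biUnion.mpr ⟨z, hz, hγ⟩⟩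
  set β := (K.biUnion (fun z => (b z).coeff.support)).max' hSne with hβ
  obtain ⟨x₁, hx₁K, hx₁β⟩ := Finset.mem_biUnion.mp ((K.biUnion (fun z => (b z).coeff.support)).max'_mem hSne)
  have hβmax : ∀ z ∈ K, ∀ γ ∈ (b z).coeff.support, γ ≤ β := by
    intro z hz γ hγ
    exact Finset.le_max' _ γ (Finset.mem_biUnion.mpr ⟨z, hz, hγ⟩)
  -- x₁ has no right descent at i
  have hx₁nd : ¬ cs.IsRightDescent x₁ i := (Finset.mem_filter.mp hx₁K).2
  have hlen : cs.length (x₁ * cs.simple i) = cs.length x₁ + 1 :=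
    cs.not_isRightDescent_iff.mp hx₁nd
  have e1 : x₁ * cs.simple i * cs.simple i = x₁ := by
    rw [mul_assoc, cs.simple_mul_simple_self, mul_one]
  -- the eigenvector relation at the pair (x₁, x₁ * s)
  have heig : d.T.repr g x₁ = vv (-p i) * d.T.repr g (x₁ * cs.simple i) := by
    have := congrArg (fun x => d.T.repr x (x₁ * cs.simple i)) hgT
    rw [d.repr_mul_simple i g (x₁ * cs.simple i), e1, map_smul, Finsupp.smul_apply,
      smul_eq_mul, if_pos (show cs.length x₁ < cs.length (x₁ * cs.simple i) by omega)] at this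
    linear_combination this
  -- x₁ * s is not in K
  have hx₁s : ∀ z ∈ K, z ≠ x₁ * cs.simple i := by
    intro z hz hc
    have : cs.IsRightDescent (x₁ * cs.simple i) i := by
      show cs.length (x₁ * cs.simple i * cs.simple i) < cs.length (x₁ * cs.simple i)
      rw [e1]; omega
    exact (Finset.mem_filter.mp hz).2 (hc ▸ this)
  -- extract the coefficient of b x₁
  have hbx₁ : b x₁ = d.T.repr g x₁ - ∑ z ∈ K.erase x₁, b z * d.T.repr (d.C z) x₁ := by
    rw [Tcoef x₁, ← Finset.add_sum_erase K _ hx₁K, d.C_diag x₁, mul_one]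
    ring
  -- evaluate at β
  have hval : (b x₁).coeff β = 0 := by
    rw [hbx₁, heig, AddMonoidAlgebra.coeff_sub, Finsupp.sub_apply]
    have hterm1 : (vv (-p i) * d.T.repr g (x₁ * cs.simple i)).coeff β = 0 := by
      rw [Tcoef (x₁ * cs.simple i), Finset.mul_sum]
      have : ∀ z ∈ K, (vv (-p i) * (b z * d.T.repr (d.C z) (x₁ * cs.simple i))).coeff β = 0 := by
        intro z hz
        rw [mul_left_comm]
        refine mul_coeff_zero (hβmax z hz) ?_
        refine support_vv_neg_mul (d.pos i) ?_
        exact fun γ hγ => le_of_lt (d.C_lt z _ (Ne.symm (hx₁s z hz)) γ hγ)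
      rw [AddMonoidAlgebra.coeff_sum, Finsupp.finset_sum_apply]
      exact Finset.sum_eq_zero this
    have hterm2 : (∑ z ∈ K.erase x₁, b z * d.T.repr (d.C z) x₁).coeff β = 0 := by
      rw [AddMonoidAlgebra.coeff_sum, Finsupp.finset_sum_apply]
      refine Finset.sum_eq_zero (fun z hz => ?_)
      have hzK : z ∈ K := Finset.mem_of_mem_erase hz
      exact mul_coeff_zero (hβmax z hzK)
        (d.C_lt z x₁ (fun hc => (Finset.mem_erase.mp hz).1 hc.symm))
    rw [hterm1, hterm2, sub_zero]
  exact absurd hval (Finsupp.mem_support_iff.mp hx₁β)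

end KLHecke

/-- If `x ≤_L y` then `R(y) ⊆ R(x)`, where `R(w)` is the right descent set of `w`.
Consequently `x ∼_L y` implies `R(x) = R(y)`, and for each `I ⊆ S` the set
`{w | R(w) = I}` is a union of left cells. -/
theorem stmt10 {B W : Type*} [Group W] {M : CoxeterMatrix B}
    (cs : CoxeterSystem M W) {Γ : Type*} [AddCommGroup Γ] [LinearOrder Γ] [IsOrderedAddMonoid Γ]
    (p : B → Γ) (H : Type*) [Ring H] [Algebra (AddMonoidAlgebra ℤ Γ) H]
    (d : KLHecke cs Γ p H) :
    (∀ x y : W, d.LeftLe x y →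
      {i : B | cs.IsRightDescent y i} ⊆ {i : B | cs.IsRightDescent x i}) ∧
    (∀ x y : W, d.LeftEquiv x y →
      {i : B | cs.IsRightDescent x i} = {i : B | cs.IsRightDescent y i}) ∧
    ∀ (I : Set B) (x y : W), {i : B | cs.IsRightDescent x i} = I →
      d.LeftEquiv x y → {i : B | cs.IsRightDescent y i} = I := by
  have step : ∀ x y : W, d.leftStep x y →
      {i : B | cs.IsRightDescent y i} ⊆ {i : B | cs.IsRightDescent x i} := by
    rintro x y ⟨j, hj⟩ t ht
    have heig : (d.C (cs.simple j) * d.C y) * d.T (cs.simple t) =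
        vv (p t) • (d.C (cs.simple j) * d.C y) := by
      rw [mul_assoc, d.C_mul_T_simple ht, mul_smul_comm]
    exact d.isRightDescent_of_repr_ne_zero heig x hj
  have part1 : ∀ x y : W, d.LeftLe x y →
      {i : B | cs.IsRightDescent y i} ⊆ {i : B | cs.IsRightDescent x i} := by
    intro x y hxy
    induction hxy with
    | refl => exact subset_rfl
    | tail hab hbc ih => exact (step _ _ hbc).trans ih
  have part2 : ∀ x y : W, d.LeftEquiv x y →
      {i : B | cs.IsRightDescent x i} = {i : B | cs.IsRightDescent y i} := by
    rintro x y ⟨h1, h2⟩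
    exact Set.Subset.antisymm (part1 y x h2) (part1 x y h1)
  exact ⟨part1, part2, fun I x y hI he => by rw [← hI]; exact (part2 x y he).symm⟩
end

section
/- Let W be a dihedral Coxeter group with S = {s,t}, st of finite order m, and σ the unique automorphism of W exchanging s and t. Define δ(w) = w if w ∈ {1, w₀} and δ(w) = σ(w)·w₀ otherwise, where w₀ is the longest element. Then δ is an involution of W; if m is odd, δ exchanges Γ_s = {w | ws<w, wt>w} and Γ_t = {w | ws>w, wt<w}, and if m is even, δ maps each of Γ_s and Γ_t onto itself. -/
open CoxeterSystem

namespace Aux16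

variable {B W : Type*} [Group W] {M : CoxeterMatrix B} (cs : CoxeterSystem M W)

lemma altP_zero (i j : B) : altP cs i j 0 = 1 := rfl

lemma altP_succ (i j : B) (k : ℕ) :
    altP cs i j (k + 1) =
      altP cs i j k * (if Even k then cs.simple i else cs.simple j) := rfl

lemma altP_even (i j : B) : ∀ l : ℕ,
    altP cs i j (2 * l) = (cs.simple i * cs.simple j) ^ l
  | 0 => by rw [Nat.mul_zero, altP_zero, pow_zero]
  | l + 1 => by
    have h1 : 2 * (l + 1) = (2 * l + 1) + 1 := by ring
    have h2 : ¬ Even (2 * l + 1) := by simp [Nat.even_add_one]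
    rw [h1, altP_succ, altP_succ, altP_even i j l, if_pos (even_two_mul l), if_neg h2,
      pow_succ, mul_assoc]

lemma altP_odd (i j : B) (l : ℕ) :
    altP cs i j (2 * l + 1) = (cs.simple i * cs.simple j) ^ l * cs.simple i := by
  rw [altP_succ, altP_even, if_pos (even_two_mul l)]

lemma ts_eq (i j : B) :
    cs.simple j * cs.simple i = (cs.simple i * cs.simple j)⁻¹ := by
  rw [mul_inv_rev, inv_simple, inv_simple]

lemma swap_gen (g x : W) (hgx : g * x = x⁻¹ * g) :
    ∀ n : ℕ, g * x ^ n = (x⁻¹) ^ n * g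
  | 0 => by simp
  | n + 1 => by
    rw [pow_succ, ← mul_assoc, swap_gen g x hgx n, mul_assoc, hgx, ← mul_assoc, ← pow_succ]

lemma sP (i j : B) :
    cs.simple i * (cs.simple i * cs.simple j) =
      (cs.simple i * cs.simple j)⁻¹ * cs.simple i := by
  rw [← ts_eq cs i j, cs.simple_mul_simple_cancel_left, cs.simple_mul_simple_cancel_right]

lemma tP (i j : B) :
    cs.simple j * (cs.simple i * cs.simple j) =
      (cs.simple i * cs.simple j)⁻¹ * cs.simple j := by
  rw [← ts_eq cs i j, mul_assoc]

lemma swap_s (i j : B) (n : ℕ) :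
    cs.simple i * (cs.simple i * cs.simple j) ^ n =
      ((cs.simple i * cs.simple j)⁻¹) ^ n * cs.simple i :=
  swap_gen (cs.simple i) _ (sP cs i j) n

lemma key (i j : B) (u : ℕ) :
    (cs.simple i * cs.simple j) ^ (u + 1) * cs.simple j =
      (cs.simple i * cs.simple j) ^ u * cs.simple i := by
  rw [pow_succ, mul_assoc, cs.simple_mul_simple_cancel_right]

lemma braid (i j : B) (m : ℕ) (h : (cs.simple i * cs.simple j) ^ m = 1) :
    altP cs i j m = altP cs j i m := by
  rcases Nat.even_or_odd m with he | ho
  · obtain ⟨v, hv⟩ := he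
    have hv' : m = 2 * v := by omega
    subst hv'
    rw [altP_even, altP_even, ts_eq cs i j, inv_pow, eq_inv_iff_mul_eq_one,
      ← pow_add, show v + v = 2 * v from by omega]
    exact h
  · obtain ⟨v, hv⟩ := ho
    subst hv
    rw [altP_odd, altP_odd, ts_eq cs i j, inv_pow]
    have h1 : ((cs.simple i * cs.simple j) ^ v)⁻¹ = (cs.simple i * cs.simple j) ^ (v + 1) := by
      rw [inv_eq_iff_mul_eq_one, ← pow_add, show v + (v + 1) = 2 * v + 1 from by omega]
      exact h
    rw [h1, key]

lemma altP_sq (i j : B) (m : ℕ) (h : (cs.simple i * cs.simple j) ^ m = 1) :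
    altP cs i j m * altP cs i j m = 1 := by
  rcases Nat.even_or_odd m with he | ho
  · obtain ⟨v, hv⟩ := he
    have hv' : m = 2 * v := by omega
    subst hv'
    rw [altP_even, ← pow_add, show v + v = 2 * v from by omega]
    exact h
  · obtain ⟨v, hv⟩ := ho
    subst hv
    rw [altP_odd]
    calc (cs.simple i * cs.simple j) ^ v * cs.simple i *
          ((cs.simple i * cs.simple j) ^ v * cs.simple i)
        = (cs.simple i * cs.simple j) ^ v *
            ((cs.simple i * (cs.simple i * cs.simple j) ^ v) * cs.simple i) := by
          group
      _ = (cs.simple i * cs.simple j) ^ v *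
            ((((cs.simple i * cs.simple j)⁻¹) ^ v * cs.simple i) * cs.simple i) := by
          rw [swap_s]
      _ = (cs.simple i * cs.simple j) ^ v * ((cs.simple i * cs.simple j)⁻¹) ^ v := by
          rw [mul_assoc (((cs.simple i * cs.simple j)⁻¹) ^ v), cs.simple_mul_simple_self, mul_one]
      _ = 1 := by rw [inv_pow]; exact mul_inv_cancel _

lemma conj_s (i j : B) (m : ℕ) (h : (cs.simple i * cs.simple j) ^ m = 1) :
    cs.simple i * altP cs i j m =
      altP cs i j m * (if Even m then cs.simple i else cs.simple j) := by
  rcases Nat.even_or_odd m with he | ho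
  · rw [if_pos he]
    obtain ⟨v, hv⟩ := he
    have hv' : m = 2 * v := by omega
    subst hv'
    rw [altP_even, swap_s, inv_pow]
    have h1 : ((cs.simple i * cs.simple j) ^ v)⁻¹ = (cs.simple i * cs.simple j) ^ v := by
      rw [inv_eq_iff_mul_eq_one, ← pow_add, show v + v = 2 * v from by omega]
      exact h
    rw [h1]
  · have ho' : ¬ Even m := by
      rcases ho with ⟨v, hv⟩
      subst hv
      simp [Nat.even_add_one, Nat.even_mul]
    rw [if_neg ho']
    obtain ⟨v, hv⟩ := ho
    subst hv
    have h1 : ((cs.simple i * cs.simple j) ^ v)⁻¹ = (cs.simple i * cs.simple j) ^ (v + 1) := by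
      rw [inv_eq_iff_mul_eq_one, ← pow_add, show v + (v + 1) = 2 * v + 1 from by omega]
      exact h
    rw [altP_odd, ← mul_assoc, swap_s, inv_pow, mul_assoc, cs.simple_mul_simple_self,
      mul_one, h1, mul_assoc, ← pow_succ]

lemma conj_t (i j : B) (m : ℕ) (h : (cs.simple i * cs.simple j) ^ m = 1) :
    cs.simple j * altP cs i j m =
      altP cs i j m * (if Even m then cs.simple j else cs.simple i) := by
  have h' : (cs.simple j * cs.simple i) ^ m = 1 := by
    rw [ts_eq cs i j, inv_pow, h, inv_one]
  have := conj_s cs j i m h'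
  rwa [← braid cs i j m h] at this

lemma KB (i j : B) (m : ℕ) (h : (cs.simple i * cs.simple j) ^ m = 1) :
    ∀ k, k ≤ m → altP cs j i k * altP cs i j m = altP cs i j (m - k) := by
  intro k
  induction k with
  | zero => intro _; rw [altP_zero, one_mul, Nat.sub_zero]
  | succ k ih =>
    intro hk1
    have hk : k ≤ m := by omega
    have ihk := ih hk
    rw [altP_succ]
    have hmk : m - k = (m - (k + 1)) + 1 := by omega
    have hpar : Even (m - (k + 1)) ↔ (Even m ↔ Even (k + 1)) := Nat.even_sub hk1
    by_cases hek : Even k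
    · rw [if_pos hek, mul_assoc, conj_t cs i j m h, ← mul_assoc, ihk, hmk, altP_succ]
      by_cases hem : Even m
      · have h1 : ¬ Even (m - (k + 1)) := by
          rw [hpar, Nat.even_add_one]; tauto
        rw [if_neg h1, if_pos hem, mul_assoc, cs.simple_mul_simple_self, mul_one]
      · have h1 : Even (m - (k + 1)) := by
          rw [hpar, Nat.even_add_one]; tauto
        rw [if_pos h1, if_neg hem, mul_assoc, cs.simple_mul_simple_self, mul_one]
    · rw [if_neg hek, mul_assoc, conj_s cs i j m h, ← mul_assoc, ihk, hmk, altP_succ]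
      by_cases hem : Even m
      · have h1 : Even (m - (k + 1)) := by
          rw [hpar, Nat.even_add_one]; tauto
        rw [if_pos h1, if_pos hem, mul_assoc, cs.simple_mul_simple_self, mul_one]
      · have h1 : ¬ Even (m - (k + 1)) := by
          rw [hpar, Nat.even_add_one]; tauto
        rw [if_neg h1, if_neg hem, mul_assoc, cs.simple_mul_simple_self, mul_one]

lemma sigma_altP (σ : W ≃* W) (i j : B) (hσi : σ (cs.simple i) = cs.simple j)
    (hσj : σ (cs.simple j) = cs.simple i) :
    ∀ k, σ (altP cs i j k) = altP cs j i k
  | 0 => by rw [altP_zero, altP_zero, map_one]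
  | k + 1 => by
    rw [altP_succ, map_mul, sigma_altP σ i j hσi hσj k, altP_succ, apply_ite σ, hσi, hσj]

lemma sigma_sq (i j : B) (hall : ∀ b : B, b = i ∨ b = j) (σ : W ≃* W)
    (hσi : σ (cs.simple i) = cs.simple j) (hσj : σ (cs.simple j) = cs.simple i)
    (w : W) : σ (σ w) = w := by
  obtain ⟨ω, rfl⟩ := cs.wordProd_surjective w
  induction ω with
  | nil => simp
  | cons b ω ih =>
    rw [wordProd_cons, map_mul, map_mul, ih]
    congr 1
    rcases hall b with rfl | rfl
    · rw [hσi, hσj]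
    · rw [hσj, hσi]

lemma lift_exists (i j : B) (hij : i ≠ j) (hall : ∀ b : B, b = i ∨ b = j) (m : ℕ)
    (hm2 : 2 ≤ m) (hm : orderOf (cs.simple i * cs.simple j) = m) :
    ∃ φ : W →* DihedralGroup m,
      φ (cs.simple i) = DihedralGroup.sr 0 ∧ φ (cs.simple j) = DihedralGroup.sr 1 := by
  classical
  set f : B → DihedralGroup m := fun b => if b = i then DihedralGroup.sr 0 else DihedralGroup.sr 1
    with hf
  have hfi : f i = DihedralGroup.sr 0 := by simp [hf]
  have hfj : f j = DihedralGroup.sr 1 := by simp [hf, Ne.symm hij]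
  have hdvd : m ∣ M.M i j := by
    rw [← hm]
    exact orderOf_dvd_of_pow_eq_one (cs.simple_mul_simple_pow i j)
  have hr1 : ((M.M i j : ℕ) : ZMod m) = 0 := (ZMod.natCast_eq_zero_iff _ _).mpr hdvd
  have hlift : M.IsLiftable f := by
    intro a b
    rcases hall a with ha | ha <;> rcases hall b with hb | hb <;> rw [ha, hb]
    · rw [M.diagonal, pow_one, hfi, DihedralGroup.sr_mul_sr, sub_self, ← DihedralGroup.one_def]
    · rw [hfi, hfj, DihedralGroup.sr_mul_sr, sub_zero, DihedralGroup.r_one_pow, hr1,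
        ← DihedralGroup.one_def]
    · have hsym : M.M j i = M.M i j := M.symmetric j i
      have hneg : (DihedralGroup.r (0 - 1) : DihedralGroup m) = (DihedralGroup.r 1)⁻¹ := by
        rw [eq_inv_iff_mul_eq_one, DihedralGroup.r_mul_r,
          show ((0 : ZMod m) - 1) + 1 = 0 from by ring, ← DihedralGroup.one_def]
      rw [hfi, hfj, DihedralGroup.sr_mul_sr, hsym, hneg, inv_pow, DihedralGroup.r_one_pow, hr1,
        ← DihedralGroup.one_def, inv_one]
    · rw [M.diagonal, pow_one, hfj, DihedralGroup.sr_mul_sr, sub_self, ← DihedralGroup.one_def]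
  exact ⟨cs.lift ⟨f, hlift⟩, by rw [cs.lift_apply_simple hlift, hfi],
    by rw [cs.lift_apply_simple hlift, hfj]⟩

lemma inj_aux (i j : B) (m : ℕ) (hm2 : 2 ≤ m) (φ : W →* DihedralGroup m)
    (hφi : φ (cs.simple i) = DihedralGroup.sr 0) (hφj : φ (cs.simple j) = DihedralGroup.sr 1) :
    ∀ k k', k ≤ m → k' ≤ m →
      (altP cs i j k = altP cs i j k' ∨ altP cs i j k = altP cs j i k') → k = k' := by
  have hφP : φ (cs.simple i * cs.simple j) = DihedralGroup.r 1 := by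
    rw [map_mul, hφi, hφj, DihedralGroup.sr_mul_sr, sub_zero]
  have hφQ : φ (cs.simple j * cs.simple i) = DihedralGroup.r (-1) := by
    rw [map_mul, hφj, hφi, DihedralGroup.sr_mul_sr, zero_sub]
  have hrneg : ∀ x : ZMod m, (DihedralGroup.r (-x) : DihedralGroup m) = (DihedralGroup.r x)⁻¹ := by
    intro x
    rw [eq_inv_iff_mul_eq_one, DihedralGroup.r_mul_r, neg_add_cancel, ← DihedralGroup.one_def]
  have hA_even : ∀ l : ℕ, φ (altP cs i j (2 * l)) = DihedralGroup.r l := by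
    intro l
    rw [altP_even, map_pow, hφP, DihedralGroup.r_one_pow]
  have hA_odd : ∀ l : ℕ, φ (altP cs i j (2 * l + 1)) = DihedralGroup.sr (-(l : ZMod m)) := by
    intro l
    rw [altP_odd, map_mul, map_pow, hφP, DihedralGroup.r_one_pow, hφi,
      DihedralGroup.r_mul_sr, zero_sub]
  have hB_even : ∀ l : ℕ, φ (altP cs j i (2 * l)) = DihedralGroup.r (-(l : ZMod m)) := by
    intro l
    rw [altP_even, map_pow, hφQ, hrneg, inv_pow, DihedralGroup.r_one_pow, ← hrneg]
  have hB_odd : ∀ l : ℕ, φ (altP cs j i (2 * l + 1)) = DihedralGroup.sr (1 + (l : ZMod m)) := by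
    intro l
    rw [altP_odd, map_mul, map_pow, hφQ, hrneg, inv_pow, DihedralGroup.r_one_pow, ← hrneg, hφj,
      DihedralGroup.r_mul_sr, sub_neg_eq_add]
  have natbound : ∀ x y : ℕ, x < m → y < m → ((x : ZMod m) = (y : ZMod m)) → x = y := by
    intro x y hx hy hxy
    have h2 := (ZMod.natCast_eq_natCast_iff' x y m).mp hxy
    rwa [Nat.mod_eq_of_lt hx, Nat.mod_eq_of_lt hy] at h2
  have dvdbound : ∀ x : ℕ, ((x : ZMod m) = 0) → x ≤ m → x = 0 ∨ x = m := by
    intro x hx hxm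
    have hdvd := (ZMod.natCast_eq_zero_iff _ _).mp hx
    rcases eq_or_lt_of_le hxm with h | h
    · exact Or.inr h
    · exact Or.inl (Nat.eq_zero_of_dvd_of_lt hdvd h)
  intro k k' hk hk' heq
  rcases Nat.even_or_odd k with hke | hko
  · obtain ⟨l, hl⟩ := hke
    have hl2 : k = 2 * l := by omega
    subst hl2
    rcases Nat.even_or_odd k' with hke' | hko'
    · obtain ⟨l', hl'⟩ := hke'
      have hl2' : k' = 2 * l' := by omega
      subst hl2'
      rcases heq with heq | heq
      · have hφeq := congrArg φ heq
        rw [hA_even, hA_even] at hφeq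
        simp only [DihedralGroup.r.injEq] at hφeq
        have := natbound l l' (by omega) (by omega) hφeq
        omega
      · have hφeq := congrArg φ heq
        rw [hA_even, hB_even] at hφeq
        simp only [DihedralGroup.r.injEq] at hφeq
        have hsum : ((l + l' : ℕ) : ZMod m) = 0 := by
          push_cast
          rw [hφeq]; ring
        rcases dvdbound _ hsum (by omega) with h | h <;> omega
    · obtain ⟨l', hl'⟩ := hko'
      subst hl'
      rcases heq with heq | heq
      · have hφeq := congrArg φ heq
        rw [hA_even, hA_odd] at hφeq
        exact absurd hφeq (by simp)
      · have hφeq := congrArg φ heq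
        rw [hA_even, hB_odd] at hφeq
        exact absurd hφeq (by simp)
  · obtain ⟨l, hl⟩ := hko
    subst hl
    rcases Nat.even_or_odd k' with hke' | hko'
    · obtain ⟨l', hl'⟩ := hke'
      have hl2' : k' = 2 * l' := by omega
      subst hl2'
      rcases heq with heq | heq
      · have hφeq := congrArg φ heq
        rw [hA_odd, hA_even] at hφeq
        exact absurd hφeq (by simp)
      · have hφeq := congrArg φ heq
        rw [hA_odd, hB_even] at hφeq
        exact absurd hφeq (by simp)
    · obtain ⟨l', hl'⟩ := hko'
      subst hl'
      rcases heq with heq | heq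
      · have hφeq := congrArg φ heq
        rw [hA_odd, hA_odd] at hφeq
        simp only [DihedralGroup.sr.injEq, neg_inj] at hφeq
        have := natbound l l' (by omega) (by omega) hφeq
        omega
      · have hφeq := congrArg φ heq
        rw [hA_odd, hB_odd] at hφeq
        simp only [DihedralGroup.sr.injEq] at hφeq
        have hsum : ((l + l' + 1 : ℕ) : ZMod m) = 0 := by
          rw [neg_eq_iff_eq_neg] at hφeq
          push_cast
          rw [hφeq]; ring
        rcases dvdbound _ hsum (by omega) with h | h <;> omega

lemma len_le (i j : B) : ∀ k, cs.length (altP cs i j k) ≤ k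
  | 0 => by rw [altP_zero]; simp
  | k + 1 => by
    rw [altP_succ]
    calc cs.length _ ≤ cs.length (altP cs i j k) +
        cs.length (if Even k then cs.simple i else cs.simple j) := cs.length_mul_le _ _
      _ ≤ k + 1 := by
        refine add_le_add (len_le i j k) ?_
        split_ifs <;> rw [cs.length_simple]

lemma step (i j : B) (n : ℕ) (b : B) (hb : b = i ∨ b = j)
    (hlen : cs.length (altP cs i j n * cs.simple b) = n + 1) :
    altP cs i j n * cs.simple b = altP cs i j (n + 1) ∨
      altP cs i j n * cs.simple b = altP cs j i (n + 1) := by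
  match n with
  | 0 =>
    rcases hb with hbe | hbe <;> rw [hbe]
    · left
      rw [altP_succ, altP_zero cs i j, if_pos Even.zero]
    · right
      rw [altP_succ, altP_zero cs i j, altP_zero cs j i, if_pos Even.zero]
  | n + 1 =>
    by_cases hev : Even (n + 1)
    · rcases hb with hbe | hbe <;> rw [hbe] at hlen ⊢
      · left
        rw [altP_succ cs i j (n + 1), if_pos hev]
      · exfalso
        have hn : ¬ Even n := by rw [← Nat.even_add_one]; exact hev
        have hcan : altP cs i j (n + 1) * cs.simple j = altP cs i j n := by
          rw [altP_succ, if_neg hn, mul_assoc, cs.simple_mul_simple_self, mul_one]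
        rw [hcan] at hlen
        have := len_le cs i j n
        omega
    · rcases hb with hbe | hbe <;> rw [hbe] at hlen ⊢
      · exfalso
        have hn : Even n := by rwa [Nat.even_add_one, not_not] at hev
        have hcan : altP cs i j (n + 1) * cs.simple i = altP cs i j n := by
          rw [altP_succ, if_pos hn, mul_assoc, cs.simple_mul_simple_self, mul_one]
        rw [hcan] at hlen
        have := len_le cs i j n
        omega
      · left
        rw [altP_succ cs i j (n + 1), if_neg hev]

lemma repr_len (i j : B) (hall : ∀ b : B, b = i ∨ b = j) :
    ∀ (n : ℕ) (w : W), cs.length w = n →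
      w = altP cs i j n ∨ w = altP cs j i n := by
  intro n
  induction n with
  | zero =>
    intro w hw
    left
    rw [altP_zero]
    exact cs.length_eq_zero_iff.mp hw
  | succ n ih =>
    intro w hw
    have hw1 : w ≠ 1 := by
      intro h
      rw [h, cs.length_one] at hw
      omega
    obtain ⟨b, hb⟩ := cs.exists_rightDescent_of_ne_one hw1
    have hlen' : cs.length (w * cs.simple b) = n := by
      have := cs.isRightDescent_iff.mp hb
      omega
    have hww : w = (w * cs.simple b) * cs.simple b :=
      (cs.simple_mul_simple_cancel_right b).symm
    rcases ih (w * cs.simple b) hlen' with h | h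
    · have hw2 : w = altP cs i j n * cs.simple b := by rw [← h]; exact hww
      rw [hw2] at hw ⊢
      exact step cs i j n b (hall b) hw
    · have hw2 : w = altP cs j i n * cs.simple b := by rw [← h]; exact hww
      rw [hw2] at hw ⊢
      exact (step cs j i n b ((hall b).symm) hw).symm

lemma classify (i j : B) (hall : ∀ b : B, b = i ∨ b = j) (m : ℕ) (hm2 : 2 ≤ m)
    (h : (cs.simple i * cs.simple j) ^ m = 1) :
    ∀ w : W, ∃ k, k ≤ m ∧ (w = altP cs i j k ∨ w = altP cs j i k) := by
  have hrep : ∀ r : ℕ, r ≤ m →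
      (cs.simple i * cs.simple j) ^ r = ((cs.simple i * cs.simple j)⁻¹) ^ (m - r) := by
    intro r hr
    rw [inv_pow, eq_inv_iff_mul_eq_one, ← pow_add, show r + (m - r) = m from by omega]
    exact h
  have hPinv : (cs.simple i * cs.simple j)⁻¹ = (cs.simple i * cs.simple j) ^ (m - 1) := by
    have h0 := hrep (m - 1) (by omega)
    rw [show m - (m - 1) = 1 from by omega, pow_one] at h0
    exact h0.symm
  have h1 : ∀ w : W, ∃ e : ℕ,
      w = (cs.simple i * cs.simple j) ^ e ∨
      w = (cs.simple i * cs.simple j) ^ e * cs.simple j := by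
    intro w
    obtain ⟨ω, rfl⟩ := cs.wordProd_surjective w
    induction ω using List.reverseRecOn with
    | nil => exact ⟨0, Or.inl (by simp)⟩
    | append_singleton ω b ih =>
      obtain ⟨e, he | he⟩ := ih
      · rcases hall b with hbe | hbe <;> rw [hbe]
        · refine ⟨e + 1, Or.inr ?_⟩
          rw [← List.concat_eq_append, cs.wordProd_concat, he, key]
        · exact ⟨e, Or.inr (by rw [← List.concat_eq_append, cs.wordProd_concat, he])⟩
      · rcases hall b with hbe | hbe <;> rw [hbe]
        · refine ⟨e + (m - 1), Or.inl ?_⟩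
          rw [← List.concat_eq_append, cs.wordProd_concat, he, mul_assoc, ts_eq cs i j, hPinv,
            ← pow_add]
        · refine ⟨e, Or.inl ?_⟩
          rw [← List.concat_eq_append, cs.wordProd_concat, he, mul_assoc,
            cs.simple_mul_simple_self, mul_one]
  intro w
  obtain ⟨e, he⟩ := h1 w
  set r := e % m with hrdef
  have hrm : r < m := Nat.mod_lt _ (by omega)
  have hPe : (cs.simple i * cs.simple j) ^ e = (cs.simple i * cs.simple j) ^ r := by
    conv_lhs => rw [← Nat.div_add_mod e m]
    rw [pow_add, pow_mul, h, one_pow, one_mul]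
  rcases he with he | he
  · by_cases h2 : 2 * r ≤ m
    · exact ⟨2 * r, h2, Or.inl (by rw [he, hPe, altP_even])⟩
    · refine ⟨2 * (m - r), by omega, Or.inr ?_⟩
      rw [he, hPe, altP_even, ts_eq cs i j, ← hrep r (by omega)]
  · by_cases h0 : r = 0
    · refine ⟨1, by omega, Or.inr ?_⟩
      rw [he, hPe, h0, pow_zero, one_mul, altP_succ, altP_zero, if_pos Even.zero, one_mul]
    · by_cases h2 : 2 * r ≤ m + 1
      · refine ⟨2 * (r - 1) + 1, by omega, Or.inl ?_⟩
        rw [he, hPe, altP_odd, ← key, show r - 1 + 1 = r from by omega]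
      · refine ⟨2 * (m - r) + 1, by omega, Or.inr ?_⟩
        rw [he, hPe, altP_odd, ts_eq cs i j, ← hrep r (by omega)]

end Aux16

set_option maxHeartbeats 2000000 in
/-- Let `W` be a dihedral Coxeter group with `S = {s,t}` (`s = s_i`, `t = s_j`), `st`
of finite order `m`, and `σ` the automorphism of `W` exchanging `s` and `t`.  Define
`δ(w) = w` if `w ∈ {1, w₀}` and `δ(w) = σ(w)·w₀` otherwise, where `w₀ = stst⋯`
(`m` factors) is the longest element.  Then `δ` is an involution of `W`; if `m` is odd,
`δ` exchanges `Γ_s = {w | ws < w, wt > w}` and `Γ_t = {w | ws > w, wt < w}`, and if `m`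
is even, `δ` maps each of `Γ_s`, `Γ_t` onto itself. -/
theorem stmt16 {B W : Type*} [Group W] [DecidableEq W] {M : CoxeterMatrix B}
    (cs : CoxeterSystem M W) (i j : B) (hij : i ≠ j) (hall : ∀ b : B, b = i ∨ b = j)
    (m : ℕ) (hm2 : 2 ≤ m) (hm : orderOf (cs.simple i * cs.simple j) = m)
    (σ : W ≃* W) (hσs : σ (cs.simple i) = cs.simple j)
    (hσt : σ (cs.simple j) = cs.simple i) :
    (∀ w : W,
      (fun w : W => if w = 1 ∨ w = altP cs i j m then w else σ w * altP cs i j m)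
        ((fun w : W =>
          if w = 1 ∨ w = altP cs i j m then w else σ w * altP cs i j m) w) = w) ∧
    (Odd m →
      (fun w : W => if w = 1 ∨ w = altP cs i j m then w else σ w * altP cs i j m) ''
          {w : W | cs.IsRightDescent w i ∧ ¬ cs.IsRightDescent w j} =
        {w : W | ¬ cs.IsRightDescent w i ∧ cs.IsRightDescent w j} ∧
      (fun w : W => if w = 1 ∨ w = altP cs i j m then w else σ w * altP cs i j m) ''
          {w : W | ¬ cs.IsRightDescent w i ∧ cs.IsRightDescent w j} =
        {w : W | cs.IsRightDescent w i ∧ ¬ cs.IsRightDescent w j}) ∧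
    (Even m →
      (fun w : W => if w = 1 ∨ w = altP cs i j m then w else σ w * altP cs i j m) ''
          {w : W | cs.IsRightDescent w i ∧ ¬ cs.IsRightDescent w j} =
        {w : W | cs.IsRightDescent w i ∧ ¬ cs.IsRightDescent w j} ∧
      (fun w : W => if w = 1 ∨ w = altP cs i j m then w else σ w * altP cs i j m) ''
          {w : W | ¬ cs.IsRightDescent w i ∧ cs.IsRightDescent w j} =
        {w : W | ¬ cs.IsRightDescent w i ∧ cs.IsRightDescent w j}) := by
  classical
  have hP : (cs.simple i * cs.simple j) ^ m = 1 := by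
    rw [← hm]; exact pow_orderOf_eq_one _
  have hQ : (cs.simple j * cs.simple i) ^ m = 1 := by
    rw [Aux16.ts_eq cs i j, inv_pow, hP, inv_one]
  have hmQ : orderOf (cs.simple j * cs.simple i) = m := by
    rw [Aux16.ts_eq cs i j, orderOf_inv, hm]
  obtain ⟨φ, hφi, hφj⟩ := Aux16.lift_exists cs i j hij hall m hm2 hm
  obtain ⟨ψ, hψj, hψi⟩ :=
    Aux16.lift_exists cs j i hij.symm (fun b => (hall b).symm) m hm2 hmQ
  have injA := Aux16.inj_aux cs i j m hm2 φ hφi hφj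
  have injB := Aux16.inj_aux cs j i m hm2 ψ hψj hψi
  have reprA := Aux16.repr_len cs i j hall
  have reprB := Aux16.repr_len cs j i (fun b => (hall b).symm)
  have lenA : ∀ k, k ≤ m → cs.length (altP cs i j k) = k := by
    intro k hk
    have hub := Aux16.len_le cs i j k
    rcases reprA (cs.length (altP cs i j k)) (altP cs i j k) rfl with h | h
    · exact (injA k _ hk (hub.trans hk) (Or.inl h)).symm
    · exact (injA k _ hk (hub.trans hk) (Or.inr h)).symm
  have lenB : ∀ k, k ≤ m → cs.length (altP cs j i k) = k := by
    intro k hk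
    have hub := Aux16.len_le cs j i k
    rcases reprB (cs.length (altP cs j i k)) (altP cs j i k) rfl with h | h
    · exact (injB k _ hk (hub.trans hk) (Or.inl h)).symm
    · exact (injB k _ hk (hub.trans hk) (Or.inr h)).symm
  have braidm : altP cs i j m = altP cs j i m := Aux16.braid cs i j m hP
  have sqm : altP cs i j m * altP cs i j m = 1 := Aux16.altP_sq cs i j m hP
  have hKB : ∀ k, k ≤ m → altP cs j i k * altP cs i j m = altP cs i j (m - k) :=
    Aux16.KB cs i j m hP
  have hKB2 : ∀ k, k ≤ m → altP cs i j k * altP cs i j m = altP cs j i (m - k) := by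
    intro k hk
    rw [braidm]
    exact Aux16.KB cs j i m hQ k hk
  have hσa : ∀ k, σ (altP cs i j k) = altP cs j i k := Aux16.sigma_altP cs σ i j hσs hσt
  have hσb : ∀ k, σ (altP cs j i k) = altP cs i j k := Aux16.sigma_altP cs σ j i hσt hσs
  have hσσ : ∀ w : W, σ (σ w) = w := Aux16.sigma_sq cs i j hall σ hσs hσt
  have hσw0 : σ (altP cs i j m) = altP cs i j m := by rw [hσa, ← braidm]
  set δ : W → W :=
    fun w => if w = 1 ∨ w = altP cs i j m then w else σ w * altP cs i j m with hδ
  have hinv : ∀ w, δ (δ w) = w := by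
    intro w
    by_cases h1 : w = 1 ∨ w = altP cs i j m
    · simp only [hδ]
      rw [if_pos h1, if_pos h1]
    · have h2 : ¬ (σ w * altP cs i j m = 1 ∨ σ w * altP cs i j m = altP cs i j m) := by
        rintro (h | h)
        · have h3 : σ w = (altP cs i j m)⁻¹ := mul_eq_one_iff_eq_inv.mp h
          have hinv0 : (altP cs i j m)⁻¹ = altP cs i j m := inv_eq_of_mul_eq_one_left sqm
          rw [hinv0, ← hσw0] at h3
          exact h1 (Or.inr (σ.injective h3))
        · have h3 : σ w = 1 := mul_right_cancel (by rw [h, one_mul])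
          have h4 : σ w = σ 1 := by rw [h3, map_one]
          exact h1 (Or.inl (σ.injective h4))
      simp only [hδ]
      rw [if_neg h1, if_neg h2, map_mul, hσσ w, hσw0, mul_assoc, sqm, mul_one]
  have DA1 : ∀ n, n + 1 ≤ m →
      cs.IsRightDescent (altP cs i j (n + 1)) (if Even n then i else j) := by
    intro n hn
    have hdown : altP cs i j (n + 1) * cs.simple (if Even n then i else j)
        = altP cs i j n := by
      rw [Aux16.altP_succ, apply_ite cs.simple]
      by_cases he : Even n
      · rw [if_pos he, mul_assoc, cs.simple_mul_simple_self, mul_one]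
      · rw [if_neg he, mul_assoc, cs.simple_mul_simple_self, mul_one]
    have hlt : cs.length (altP cs i j (n + 1) * cs.simple (if Even n then i else j))
        < cs.length (altP cs i j (n + 1)) := by
      rw [hdown, lenA (n + 1) hn, lenA n (by omega)]
      omega
    exact hlt
  have DA2 : ∀ n, n + 1 + 1 ≤ m →
      ¬ cs.IsRightDescent (altP cs i j (n + 1)) (if Even (n + 1) then i else j) := by
    intro n hn hc
    have hup : altP cs i j (n + 1) * cs.simple (if Even (n + 1) then i else j)
        = altP cs i j (n + 1 + 1) := by
      rw [Aux16.altP_succ cs i j (n + 1), apply_ite cs.simple]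
    have hc' : cs.length (altP cs i j (n + 1) * cs.simple (if Even (n + 1) then i else j))
        < cs.length (altP cs i j (n + 1)) := hc
    rw [hup, lenA (n + 1 + 1) hn, lenA (n + 1) (by omega)] at hc'
    omega
  have DB1 : ∀ n, n + 1 ≤ m →
      cs.IsRightDescent (altP cs j i (n + 1)) (if Even n then j else i) := by
    intro n hn
    have hdown : altP cs j i (n + 1) * cs.simple (if Even n then j else i)
        = altP cs j i n := by
      rw [Aux16.altP_succ, apply_ite cs.simple]
      by_cases he : Even n
      · rw [if_pos he, mul_assoc, cs.simple_mul_simple_self, mul_one]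
      · rw [if_neg he, mul_assoc, cs.simple_mul_simple_self, mul_one]
    have hlt : cs.length (altP cs j i (n + 1) * cs.simple (if Even n then j else i))
        < cs.length (altP cs j i (n + 1)) := by
      rw [hdown, lenB (n + 1) hn, lenB n (by omega)]
      omega
    exact hlt
  have DB2 : ∀ n, n + 1 + 1 ≤ m →
      ¬ cs.IsRightDescent (altP cs j i (n + 1)) (if Even (n + 1) then j else i) := by
    intro n hn hc
    have hup : altP cs j i (n + 1) * cs.simple (if Even (n + 1) then j else i)
        = altP cs j i (n + 1 + 1) := by
      rw [Aux16.altP_succ cs j i (n + 1), apply_ite cs.simple]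
    have hc' : cs.length (altP cs j i (n + 1) * cs.simple (if Even (n + 1) then j else i))
        < cs.length (altP cs j i (n + 1)) := hc
    rw [hup, lenB (n + 1 + 1) hn, lenB (n + 1) (by omega)] at hc'
    omega
  have DW1 : cs.IsRightDescent (altP cs i j m) i ∧ cs.IsRightDescent (altP cs i j m) j := by
    obtain ⟨n, rfl⟩ : ∃ n, m = n + 1 := ⟨m - 1, by omega⟩
    have h1 := DA1 n (le_refl _)
    have h2 := DB1 n (le_refl _)
    rw [← braidm] at h2
    by_cases he : Even n
    · rw [if_pos he] at h1 h2
      exact ⟨h1, h2⟩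
    · rw [if_neg he] at h1 h2
      exact ⟨h2, h1⟩
  have CL := Aux16.classify cs i j hall m hm2 hP
  have memS : ∀ w, cs.IsRightDescent w i → ¬ cs.IsRightDescent w j →
      ∃ k, 1 ≤ k ∧ k + 1 ≤ m ∧
        ((w = altP cs i j k ∧ ¬ Even k) ∨ (w = altP cs j i k ∧ Even k)) := by
    intro w hdi hdj
    obtain ⟨k, hk, hcase⟩ := CL w
    have hk0 : k ≠ 0 := by
      rintro rfl
      have hw1 : w = 1 := by
        rcases hcase with rfl | rfl
        · exact Aux16.altP_zero cs i j
        · exact Aux16.altP_zero cs j i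
      rw [hw1] at hdi
      exact cs.not_isRightDescent_one i hdi
    have hkm : k ≠ m := by
      rintro rfl
      rcases hcase with rfl | rfl
      · exact hdj DW1.2
      · exact hdj (braidm ▸ DW1.2)
    refine ⟨k, by omega, by omega, ?_⟩
    obtain ⟨n, rfl⟩ : ∃ n, k = n + 1 := ⟨k - 1, by omega⟩
    rcases hcase with rfl | rfl
    · refine Or.inl ⟨rfl, ?_⟩
      intro hev
      have h2 := DA2 n (by omega)
      rw [if_pos hev] at h2
      exact h2 hdi
    · refine Or.inr ⟨rfl, ?_⟩
      by_contra hodd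
      have hn : Even n := by
        rw [Nat.even_add_one, not_not] at hodd
        exact hodd
      have h1 := DB1 n (by omega)
      rw [if_pos hn] at h1
      exact hdj h1
  have memT : ∀ w, cs.IsRightDescent w j → ¬ cs.IsRightDescent w i →
      ∃ k, 1 ≤ k ∧ k + 1 ≤ m ∧
        ((w = altP cs i j k ∧ Even k) ∨ (w = altP cs j i k ∧ ¬ Even k)) := by
    intro w hdj hdi
    obtain ⟨k, hk, hcase⟩ := CL w
    have hk0 : k ≠ 0 := by
      rintro rfl
      have hw1 : w = 1 := by
        rcases hcase with rfl | rfl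
        · exact Aux16.altP_zero cs i j
        · exact Aux16.altP_zero cs j i
      rw [hw1] at hdj
      exact cs.not_isRightDescent_one j hdj
    have hkm : k ≠ m := by
      rintro rfl
      rcases hcase with rfl | rfl
      · exact hdi DW1.1
      · exact hdi (braidm ▸ DW1.1)
    refine ⟨k, by omega, by omega, ?_⟩
    obtain ⟨n, rfl⟩ : ∃ n, k = n + 1 := ⟨k - 1, by omega⟩
    rcases hcase with rfl | rfl
    · refine Or.inl ⟨rfl, ?_⟩
      by_contra hodd
      have hn : Even n := by
        rw [Nat.even_add_one, not_not] at hodd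
        exact hodd
      have h1 := DA1 n (by omega)
      rw [if_pos hn] at h1
      exact hdi h1
    · refine Or.inr ⟨rfl, ?_⟩
      intro hev
      have h2 := DB2 n (by omega)
      rw [if_pos hev] at h2
      exact h2 hdj
  have hδa : ∀ k, 1 ≤ k → k + 1 ≤ m → δ (altP cs i j k) = altP cs i j (m - k) := by
    intro k h1 h2
    have hne1 : altP cs i j k ≠ 1 := by
      intro h
      have he := lenA k (by omega)
      rw [h, cs.length_one] at he
      omega
    have hnem : altP cs i j k ≠ altP cs i j m := by
      intro h
      have e1 := lenA k (by omega)
      have e2 := lenA m (le_refl m)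
      rw [h, e2] at e1
      omega
    have hcond : ¬ (altP cs i j k = 1 ∨ altP cs i j k = altP cs i j m) := by
      rintro (h | h)
      · exact hne1 h
      · exact hnem h
    simp only [hδ]
    rw [if_neg hcond, hσa, hKB k (by omega)]
  have hδb : ∀ k, 1 ≤ k → k + 1 ≤ m → δ (altP cs j i k) = altP cs j i (m - k) := by
    intro k h1 h2
    have hne1 : altP cs j i k ≠ 1 := by
      intro h
      have he := lenB k (by omega)
      rw [h, cs.length_one] at he
      omega
    have hnem : altP cs j i k ≠ altP cs i j m := by
      intro h
      have e1 := lenB k (by omega)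
      have e2 := lenA m (le_refl m)
      rw [h, e2] at e1
      omega
    have hcond : ¬ (altP cs j i k = 1 ∨ altP cs j i k = altP cs i j m) := by
      rintro (h | h)
      · exact hne1 h
      · exact hnem h
    simp only [hδ]
    rw [if_neg hcond, hσb, hKB2 k (by omega)]
  have coreS : ∀ w, cs.IsRightDescent w i → ¬ cs.IsRightDescent w j →
      (Even m → cs.IsRightDescent (δ w) i ∧ ¬ cs.IsRightDescent (δ w) j) ∧
      (¬ Even m → ¬ cs.IsRightDescent (δ w) i ∧ cs.IsRightDescent (δ w) j) := by
    intro w hdi hdj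
    obtain ⟨k, hk1, hk2, hcase⟩ := memS w hdi hdj
    obtain ⟨n, hn⟩ : ∃ n, m - k = n + 1 := ⟨m - k - 1, by omega⟩
    rcases hcase with ⟨rfl, hkodd⟩ | ⟨rfl, hkev⟩
    · rw [hδa k hk1 hk2]
      have hd := DA1 n (by omega)
      have hnd := DA2 n (by omega)
      rw [← hn] at hd hnd
      have hEn : Even n ↔ ¬ Even (m - k) := by
        rw [hn, Nat.even_add_one]
        tauto
      constructor
      · intro hEm
        have hmk : ¬ Even (m - k) := by
          rw [Nat.even_sub (by omega : k ≤ m)]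
          tauto
        rw [if_pos (hEn.mpr hmk)] at hd
        rw [if_neg hmk] at hnd
        exact ⟨hd, hnd⟩
      · intro hOm
        have hmk : Even (m - k) := by
          rw [Nat.even_sub (by omega : k ≤ m)]
          tauto
        rw [if_neg (fun hh => (hEn.mp hh) hmk)] at hd
        rw [if_pos hmk] at hnd
        exact ⟨hnd, hd⟩
    · rw [hδb k hk1 hk2]
      have hd := DB1 n (by omega)
      have hnd := DB2 n (by omega)
      rw [← hn] at hd hnd
      have hEn : Even n ↔ ¬ Even (m - k) := by
        rw [hn, Nat.even_add_one]
        tauto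
      constructor
      · intro hEm
        have hmk : Even (m - k) := by
          rw [Nat.even_sub (by omega : k ≤ m)]
          tauto
        rw [if_neg (fun hh => (hEn.mp hh) hmk)] at hd
        rw [if_pos hmk] at hnd
        exact ⟨hd, hnd⟩
      · intro hOm
        have hmk : ¬ Even (m - k) := by
          rw [Nat.even_sub (by omega : k ≤ m)]
          tauto
        rw [if_pos (hEn.mpr hmk)] at hd
        rw [if_neg hmk] at hnd
        exact ⟨hnd, hd⟩
  have coreT : ∀ w, cs.IsRightDescent w j → ¬ cs.IsRightDescent w i →
      (Even m → cs.IsRightDescent (δ w) j ∧ ¬ cs.IsRightDescent (δ w) i) ∧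
      (¬ Even m → ¬ cs.IsRightDescent (δ w) j ∧ cs.IsRightDescent (δ w) i) := by
    intro w hdj hdi
    obtain ⟨k, hk1, hk2, hcase⟩ := memT w hdj hdi
    obtain ⟨n, hn⟩ : ∃ n, m - k = n + 1 := ⟨m - k - 1, by omega⟩
    rcases hcase with ⟨rfl, hkev⟩ | ⟨rfl, hkodd⟩
    · rw [hδa k hk1 hk2]
      have hd := DA1 n (by omega)
      have hnd := DA2 n (by omega)
      rw [← hn] at hd hnd
      have hEn : Even n ↔ ¬ Even (m - k) := by
        rw [hn, Nat.even_add_one]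
        tauto
      constructor
      · intro hEm
        have hmk : Even (m - k) := by
          rw [Nat.even_sub (by omega : k ≤ m)]
          tauto
        rw [if_neg (fun hh => (hEn.mp hh) hmk)] at hd
        rw [if_pos hmk] at hnd
        exact ⟨hd, hnd⟩
      · intro hOm
        have hmk : ¬ Even (m - k) := by
          rw [Nat.even_sub (by omega : k ≤ m)]
          tauto
        rw [if_pos (hEn.mpr hmk)] at hd
        rw [if_neg hmk] at hnd
        exact ⟨hnd, hd⟩
    · rw [hδb k hk1 hk2]
      have hd := DB1 n (by omega)
      have hnd := DB2 n (by omega)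
      rw [← hn] at hd hnd
      have hEn : Even n ↔ ¬ Even (m - k) := by
        rw [hn, Nat.even_add_one]
        tauto
      constructor
      · intro hEm
        have hmk : ¬ Even (m - k) := by
          rw [Nat.even_sub (by omega : k ≤ m)]
          tauto
        rw [if_pos (hEn.mpr hmk)] at hd
        rw [if_neg hmk] at hnd
        exact ⟨hd, hnd⟩
      · intro hOm
        have hmk : Even (m - k) := by
          rw [Nat.even_sub (by omega : k ≤ m)]
          tauto
        rw [if_neg (fun hh => (hEn.mp hh) hmk)] at hd
        rw [if_pos hmk] at hnd
        exact ⟨hnd, hd⟩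
  refine ⟨hinv, ?_, ?_⟩
  · intro hOdd
    have hOm : ¬ Even m := by
      rcases hOdd with ⟨v, hv⟩
      subst hv
      simp [Nat.even_add_one, Nat.even_mul]
    constructor
    · apply Set.eq_of_subset_of_subset
      · rintro x ⟨w, ⟨h1, h2⟩, rfl⟩
        exact (coreS w h1 h2).2 hOm
      · rintro x ⟨h1, h2⟩
        have hc := (coreT x h2 h1).2 hOm
        exact ⟨δ x, ⟨hc.2, hc.1⟩, hinv x⟩
    · apply Set.eq_of_subset_of_subset
      · rintro x ⟨w, ⟨h1, h2⟩, rfl⟩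
        have hc := (coreT w h2 h1).2 hOm
        exact ⟨hc.2, hc.1⟩
      · rintro x ⟨h1, h2⟩
        have hc := (coreS x h1 h2).2 hOm
        exact ⟨δ x, ⟨hc.1, hc.2⟩, hinv x⟩
  · intro hEm
    constructor
    · apply Set.eq_of_subset_of_subset
      · rintro x ⟨w, ⟨h1, h2⟩, rfl⟩
        exact (coreS w h1 h2).1 hEm
      · rintro x ⟨h1, h2⟩
        exact ⟨δ x, (coreS x h1 h2).1 hEm, hinv x⟩
    · apply Set.eq_of_subset_of_subset
      · rintro x ⟨w, ⟨h1, h2⟩, rfl⟩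
        have hc := (coreT w h2 h1).1 hEm
        exact ⟨hc.2, hc.1⟩
      · rintro x ⟨h1, h2⟩
        have hc := (coreT x h2 h1).1 hEm
        exact ⟨δ x, ⟨hc.2, hc.1⟩, hinv x⟩
end
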